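/- arXiv:1111.0575 — 3 statements merged into one kernel-verified Lean document; each statement's English description precedes it below -/
import Mathlib

section
/- For every Young diagram λ with n boxes, (n+1)·f^λ = Σ_{ν : λ ↗ ν} f^ν, where the sum is over all Young diagrams ν with n+1 boxes obtained from λ by adding one box, and f^λ denotes the number of standard Young tableaux of shape λ. -/
structure SYT (μ : YoungDiagram) where
  entry : ℕ → ℕ → ℕ
  mem_iff : ∀ i j, (i, j) ∈ μ ↔ 1 ≤ entry i j
  le_card : ∀ i j, entry i j ≤ μ.card
  injOn : ∀ i j i' j', (i, j) ∈ μ → (i', j') ∈ μ → entry i j = entry i' j' →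
    (i, j) = (i', j')
  row_lt : ∀ i j, (i, j + 1) ∈ μ → entry i j < entry i (j + 1)
  col_lt : ∀ i j, (i + 1, j) ∈ μ → entry i j < entry (i + 1) j

/-- The number of standard Young tableaux of shape `μ`. -/
noncomputable def fSYT (μ : YoungDiagram) : ℕ := Nat.card (SYT μ)

/-- `ν` is obtained from `μ` by adding a single box (`μ ↗ ν`). -/
def YDcovers (μ ν : YoungDiagram) : Prop := μ.cells ⊆ ν.cells ∧ ν.card = μ.card + 1

namespace SYTaux

theorem entry_eq_zero {μ : YoungDiagram} (T : SYT μ) {i j : ℕ} (h : (i, j) ∉ μ) :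
    T.entry i j = 0 :=
  Nat.eq_zero_of_not_pos (fun hp => h ((T.mem_iff i j).2 hp))

theorem ext' {μ : YoungDiagram} {T S : SYT μ} (h : T.entry = S.entry) : T = S := by
  cases T; cases S; simpa using h

instance (μ : YoungDiagram) : Finite (SYT μ) := by
  classical
  have hf : Function.Injective
      (fun (T : SYT μ) (c : μ.cells) => (⟨T.entry c.1.1 c.1.2, Nat.lt_succ_of_le (T.le_card _ _)⟩ :
        Fin (μ.card + 1))) := by
    intro T S h
    apply ext'; funext i j
    by_cases hm : (i, j) ∈ μ
    · have := congrFun h ⟨(i, j), by simpa using hm⟩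
      simpa using congrArg Fin.val this
    · rw [entry_eq_zero T hm, entry_eq_zero S hm]
  exact Finite.of_injective _ hf

/-- the entries of a SYT are exactly `1..n` on the cells -/
theorem image_entry {μ : YoungDiagram} (T : SYT μ) :
    μ.cells.image (fun c => T.entry c.1 c.2) = Finset.Icc 1 μ.card := by
  classical
  apply Finset.eq_of_subset_of_card_le
  · intro k hk
    simp only [Finset.mem_image] at hk
    obtain ⟨c, hc, rfl⟩ := hk
    have h1 : (c.1, c.2) ∈ μ := by simpa using hc
    rw [Finset.mem_Icc]
    exact ⟨(T.mem_iff c.1 c.2).1 h1, T.le_card _ _⟩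
  · have hinj : Set.InjOn (fun c : ℕ × ℕ => T.entry c.1 c.2) μ.cells := by
      intro c hc d hd h
      have := T.injOn c.1 c.2 d.1 d.2 (by simpa using hc) (by simpa using hd) h
      rwa [Prod.mk.eta, Prod.mk.eta] at this
    rw [Finset.card_image_of_injOn hinj, Nat.card_Icc, Nat.add_sub_cancel]

theorem exists_entry_eq {μ : YoungDiagram} (T : SYT μ) {k : ℕ} (h1 : 1 ≤ k)
    (h2 : k ≤ μ.card) : ∃ c : ℕ × ℕ, c ∈ μ ∧ T.entry c.1 c.2 = k := by
  classical
  have : k ∈ μ.cells.image (fun c => T.entry c.1 c.2) := by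
    rw [image_entry]; exact Finset.mem_Icc.mpr ⟨h1, h2⟩
  obtain ⟨c, hc, hck⟩ := Finset.mem_image.mp this
  exact ⟨c, by simpa using hc, hck⟩

instance : DecidableEq YoungDiagram := fun μ ν =>
  decidable_of_iff (μ.cells = ν.cells) (by constructor <;> intro h <;> [exact YoungDiagram.ext h; rw [h]])

/-- `c` is an addable corner of `μ`. -/
def IsAdd (μ : YoungDiagram) (c : ℕ × ℕ) : Prop :=
  c ∉ μ ∧ (c.1 = 0 ∨ (c.1 - 1, c.2) ∈ μ) ∧ (c.2 = 0 ∨ (c.1, c.2 - 1) ∈ μ)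

/-- `c` is a removable corner of `μ`. -/
def IsRm (μ : YoungDiagram) (c : ℕ × ℕ) : Prop :=
  c ∈ μ ∧ (c.1 + 1, c.2) ∉ μ ∧ (c.1, c.2 + 1) ∉ μ

instance (μ : YoungDiagram) : DecidablePred (IsAdd μ) := fun c => by unfold IsAdd; infer_instance
instance (μ : YoungDiagram) : DecidablePred (IsRm μ) := fun c => by unfold IsRm; infer_instance

theorem isAdd_lowerSet {μ : YoungDiagram} {c : ℕ × ℕ} (h : IsAdd μ c) :
    IsLowerSet (↑(insert c μ.cells) : Set (ℕ × ℕ)) := by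
  obtain ⟨i, j⟩ := c
  obtain ⟨h0, h1, h2⟩ := h
  intro x y hyx hx
  simp only [Finset.coe_insert, Set.mem_insert_iff, Finset.mem_coe, YoungDiagram.mem_cells] at hx ⊢
  rcases hx with rfl | hx
  · obtain ⟨a, b⟩ := y
    obtain ⟨ha, hb⟩ := hyx
    simp only at ha hb h1 h2
    rcases Nat.lt_or_ge a i with hlt | hge
    · right
      have h1' : (i - 1, j) ∈ μ := by
        rcases h1 with h1 | h1
        · omega
        · exact h1
      exact μ.up_left_mem (by omega) hb h1'
    · have hai : a = i := le_antisymm (by omega) hge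
      rcases Nat.lt_or_ge b j with hblt | hbge
      · right
        have h2' : (i, j - 1) ∈ μ := by
          rcases h2 with h2 | h2
          · omega
          · exact h2
        exact μ.up_left_mem (by omega) (by omega) h2'
      · left
        have hbj : b = j := le_antisymm (by omega) hbge
        simp [hai, hbj]
  · exact Or.inr (μ.isLowerSet hyx hx)

theorem isRm_lowerSet {μ : YoungDiagram} {c : ℕ × ℕ} (h : IsRm μ c) :
    IsLowerSet (↑(μ.cells.erase c) : Set (ℕ × ℕ)) := by
  obtain ⟨i, j⟩ := c
  obtain ⟨h0, h1, h2⟩ := h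
  intro x y hyx hx
  simp only [Finset.coe_erase, Set.mem_diff, Finset.mem_coe, YoungDiagram.mem_cells,
    Set.mem_singleton_iff] at hx ⊢
  obtain ⟨hxμ, hxc⟩ := hx
  refine ⟨μ.isLowerSet hyx hxμ, ?_⟩
  rintro rfl
  obtain ⟨a, b⟩ := x
  obtain ⟨ha, hb⟩ := hyx
  simp only at ha hb
  rcases Nat.lt_or_ge i a with hlt | hge
  · exact h1 (μ.up_left_mem (by omega) hb hxμ)
  · have : a = i := by omega
    subst this
    rcases Nat.lt_or_ge j b with hblt | hbge
    · exact h2 (μ.up_left_mem le_rfl (by omega) hxμ)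
    · have hbj : b = j := by omega
      exact hxc (by simp [hbj])

/-- Add a cell to a Young diagram (junk value `μ` if not addable). -/
def addYD (μ : YoungDiagram) (c : ℕ × ℕ) : YoungDiagram :=
  if h : IsAdd μ c then ⟨insert c μ.cells, isAdd_lowerSet h⟩ else μ

/-- Remove a cell from a Young diagram (junk value `μ` if not removable). -/
def rmYD (μ : YoungDiagram) (c : ℕ × ℕ) : YoungDiagram :=
  if h : IsRm μ c then ⟨μ.cells.erase c, isRm_lowerSet h⟩ else μ

theorem addYD_cells {μ : YoungDiagram} {c : ℕ × ℕ} (h : IsAdd μ c) :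
    (addYD μ c).cells = insert c μ.cells := by rw [addYD, dif_pos h]

theorem rmYD_cells {μ : YoungDiagram} {c : ℕ × ℕ} (h : IsRm μ c) :
    (rmYD μ c).cells = μ.cells.erase c := by rw [rmYD, dif_pos h]

theorem addYD_card {μ : YoungDiagram} {c : ℕ × ℕ} (h : IsAdd μ c) :
    (addYD μ c).card = μ.card + 1 := by
  rw [YoungDiagram.card, addYD_cells h, Finset.card_insert_of_notMem (by exact_mod_cast h.1)]

theorem rmYD_card {μ : YoungDiagram} {c : ℕ × ℕ} (h : IsRm μ c) :
    μ.card = (rmYD μ c).card + 1 := by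
  rw [YoungDiagram.card, YoungDiagram.card, rmYD_cells h,
    Finset.card_erase_of_mem (by exact_mod_cast h.1)]
  have : 0 < μ.cells.card := Finset.card_pos.mpr ⟨c, by exact_mod_cast h.1⟩
  omega

/-- Addable corners, as a finset. -/
def addCells (μ : YoungDiagram) : Finset (ℕ × ℕ) :=
  (Finset.range (μ.card + 1) ×ˢ Finset.range (μ.card + 1)).filter (IsAdd μ)

def rmCells (μ : YoungDiagram) : Finset (ℕ × ℕ) := μ.cells.filter (IsRm μ)

/-- Upper covers of `μ`, as a finset. -/
def covs (μ : YoungDiagram) : Finset YoungDiagram := (addCells μ).image (addYD μ)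

/-- Lower covers of `μ`, as a finset. -/
def lcovs (μ : YoungDiagram) : Finset YoungDiagram := (rmCells μ).image (rmYD μ)

theorem rowLen_le_card (μ : YoungDiagram) (i : ℕ) : μ.rowLen i ≤ μ.card := by
  rw [μ.rowLen_eq_card]
  exact Finset.card_le_card (Finset.filter_subset _ _)

theorem colLen_le_card (μ : YoungDiagram) (j : ℕ) : μ.colLen j ≤ μ.card := by
  rw [μ.colLen_eq_card]
  exact Finset.card_le_card (Finset.filter_subset _ _)

theorem mem_addCells {μ : YoungDiagram} {c : ℕ × ℕ} : c ∈ addCells μ ↔ IsAdd μ c := by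
  rw [addCells, Finset.mem_filter]
  constructor
  · exact fun h => h.2
  · intro h
    refine ⟨?_, h⟩
    obtain ⟨i, j⟩ := c
    obtain ⟨h0, h1, h2⟩ := h
    simp only [Finset.mem_product, Finset.mem_range]
    constructor
    · rcases h1 with h1 | h1
      · simp at h1; omega
      · have : i - 1 < μ.colLen j := YoungDiagram.mem_iff_lt_colLen.mp h1
        have := colLen_le_card μ j
        omega
    · rcases h2 with h2 | h2
      · simp at h2; omega
      · have : j - 1 < μ.rowLen i := YoungDiagram.mem_iff_lt_rowLen.mp h2
        have := rowLen_le_card μ i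
        omega

theorem mem_rmCells {μ : YoungDiagram} {c : ℕ × ℕ} : c ∈ rmCells μ ↔ IsRm μ c := by
  rw [rmCells, Finset.mem_filter]
  exact ⟨fun h => h.2, fun h => ⟨by exact_mod_cast h.1, h⟩⟩

theorem mem_covs {μ ν : YoungDiagram} : ν ∈ covs μ ↔ (μ.cells ⊆ ν.cells ∧ ν.card = μ.card + 1) := by
  constructor
  · intro h
    obtain ⟨c, hc, rfl⟩ := Finset.mem_image.mp h
    rw [mem_addCells] at hc
    rw [addYD_cells hc, addYD_card hc]
    exact ⟨Finset.subset_insert _ _, rfl⟩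
  · rintro ⟨hsub, hcard⟩
    -- the added cell
    have hcard' : ν.cells.card = μ.cells.card + 1 := hcard
    have hcd : (ν.cells \ μ.cells).card = 1 := by
      rw [Finset.card_sdiff_of_subset hsub]; omega
    obtain ⟨c, hc⟩ := Finset.card_eq_one.mp hcd
    have hcmem : c ∈ ν.cells ∧ c ∉ μ.cells := by
      have : c ∈ ν.cells \ μ.cells := hc ▸ Finset.mem_singleton_self c
      simpa using this
    have hone : ∀ x, x ∈ ν.cells → x ∉ μ.cells → x = c := by
      intro x hx1 hx2
      have : x ∈ ν.cells \ μ.cells := Finset.mem_sdiff.mpr ⟨hx1, hx2⟩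
      rw [hc] at this; simpa using this
    obtain ⟨i, j⟩ := c
    have hadd : IsAdd μ (i, j) := by
      refine ⟨by exact_mod_cast hcmem.2, ?_, ?_⟩
      · rcases Nat.eq_zero_or_pos i with h | h
        · exact Or.inl h
        · right
          have hν : (i - 1, j) ∈ ν := ν.up_left_mem (Nat.sub_le i 1) le_rfl (by exact_mod_cast hcmem.1)
          by_contra hμ
          have := hone (i - 1, j) (by exact_mod_cast hν) (by exact_mod_cast hμ)
          simp at this; omega
      · rcases Nat.eq_zero_or_pos j with h | h
        · exact Or.inl h
        · right
          have hν : (i, j - 1) ∈ ν := ν.up_left_mem le_rfl (Nat.sub_le j 1) (by exact_mod_cast hcmem.1)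
          by_contra hμ
          have := hone (i, j - 1) (by exact_mod_cast hν) (by exact_mod_cast hμ)
          simp at this; omega
    have hkey : addYD μ (i, j) = ν := by
      apply YoungDiagram.ext
      rw [addYD_cells hadd]
      apply Finset.eq_of_subset_of_card_le
      · intro x hx
        rcases Finset.mem_insert.mp hx with rfl | hx
        · exact hcmem.1
        · exact hsub hx
      · rw [Finset.card_insert_of_notMem (by exact_mod_cast hcmem.2)]
        have : ν.cells.card = μ.cells.card + 1 := hcard
        omega
    exact Finset.mem_image.mpr ⟨(i, j), mem_addCells.mpr hadd, hkey⟩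

theorem mem_lcovs {μ ν : YoungDiagram} : ν ∈ lcovs μ ↔ (ν.cells ⊆ μ.cells ∧ μ.card = ν.card + 1) := by
  constructor
  · intro h
    obtain ⟨c, hc, rfl⟩ := Finset.mem_image.mp h
    rw [mem_rmCells] at hc
    rw [rmYD_cells hc]
    exact ⟨Finset.erase_subset _ _, rmYD_card hc⟩
  · rintro ⟨hsub, hcard⟩
    have hcard' : μ.cells.card = ν.cells.card + 1 := hcard
    have hcd : (μ.cells \ ν.cells).card = 1 := by
      rw [Finset.card_sdiff_of_subset hsub]; omega
    obtain ⟨c, hc⟩ := Finset.card_eq_one.mp hcd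
    have hcmem : c ∈ μ.cells ∧ c ∉ ν.cells := by
      have : c ∈ μ.cells \ ν.cells := hc ▸ Finset.mem_singleton_self c
      simpa using this
    have hone : ∀ x, x ∈ μ.cells → x ∉ ν.cells → x = c := by
      intro x hx1 hx2
      have : x ∈ μ.cells \ ν.cells := Finset.mem_sdiff.mpr ⟨hx1, hx2⟩
      rw [hc] at this; simpa using this
    obtain ⟨i, j⟩ := c
    have hrm : IsRm μ (i, j) := by
      refine ⟨by exact_mod_cast hcmem.1, ?_, ?_⟩
      · intro hμ
        have hν : (i + 1, j) ∉ ν.cells := by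
          intro hν
          exact hcmem.2 (by exact_mod_cast ν.up_left_mem (Nat.le_succ i) le_rfl (by exact_mod_cast hν))
        have := hone (i + 1, j) (by exact_mod_cast hμ) hν
        simp at this
      · intro hμ
        have hν : (i, j + 1) ∉ ν.cells := by
          intro hν
          exact hcmem.2 (by exact_mod_cast ν.up_left_mem le_rfl (Nat.le_succ j) (by exact_mod_cast hν))
        have := hone (i, j + 1) (by exact_mod_cast hμ) hν
        simp at this
    have hkey : rmYD μ (i, j) = ν := by
      apply YoungDiagram.ext
      rw [rmYD_cells hrm]
      apply Finset.eq_of_subset_of_card_le _ _ |>.symm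
      · intro x hx
        refine Finset.mem_erase.mpr ⟨?_, hsub hx⟩
        rintro rfl
        exact hcmem.2 hx
      · rw [Finset.card_erase_of_mem (by exact_mod_cast hcmem.1)]
        have : μ.cells.card = ν.cells.card + 1 := hcard
        omega
    exact Finset.mem_image.mpr ⟨(i, j), mem_rmCells.mpr hrm, hkey⟩


theorem isAdd_iff {μ : YoungDiagram} {i j : ℕ} :
    IsAdd μ (i, j) ↔ j = μ.rowLen i ∧ (i = 0 ∨ μ.rowLen i < μ.rowLen (i - 1)) := by
  constructor
  · rintro ⟨h0, h1, h2⟩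
    simp only at h0 h1 h2
    have hge : μ.rowLen i ≤ j := by
      by_contra h
      exact h0 (YoungDiagram.mem_iff_lt_rowLen.mpr (by omega))
    have hj : j = μ.rowLen i := by
      rcases h2 with h2 | h2
      · omega
      · have := YoungDiagram.mem_iff_lt_rowLen.mp h2
        omega
    refine ⟨hj, ?_⟩
    rcases h1 with h1 | h1
    · exact Or.inl h1
    · right
      have := YoungDiagram.mem_iff_lt_rowLen.mp h1
      omega
  · rintro ⟨rfl, h1⟩
    refine ⟨?_, ?_, ?_⟩
    · intro h
      exact absurd (YoungDiagram.mem_iff_lt_rowLen.mp h) (lt_irrefl _)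
    · simp only
      rcases h1 with h1 | h1
      · exact Or.inl h1
      · exact Or.inr (YoungDiagram.mem_iff_lt_rowLen.mpr h1)
    · simp only
      rcases Nat.eq_zero_or_pos (μ.rowLen i) with h | h
      · exact Or.inl h
      · exact Or.inr (YoungDiagram.mem_iff_lt_rowLen.mpr (by omega))

theorem isRm_iff {μ : YoungDiagram} {i j : ℕ} :
    IsRm μ (i, j) ↔ j + 1 = μ.rowLen i ∧ μ.rowLen (i + 1) < μ.rowLen i := by
  constructor
  · rintro ⟨h0, h1, h2⟩
    simp only at h0 h1 h2
    have ha := YoungDiagram.mem_iff_lt_rowLen.mp h0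
    have hb : ¬ j + 1 < μ.rowLen i := fun h => h2 (YoungDiagram.mem_iff_lt_rowLen.mpr h)
    have hc : ¬ i + 1 < μ.colLen j := fun h => h1 (YoungDiagram.mem_iff_lt_colLen.mpr h)
    have hd : ¬ j < μ.rowLen (i + 1) := fun h => h1 (YoungDiagram.mem_iff_lt_rowLen.mpr h)
    omega
  · rintro ⟨h1, h2⟩
    refine ⟨YoungDiagram.mem_iff_lt_rowLen.mpr (by omega), ?_, ?_⟩
    · simp only
      intro h
      exact absurd (YoungDiagram.mem_iff_lt_rowLen.mp h) (by omega)
    · simp only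
      intro h
      exact absurd (YoungDiagram.mem_iff_lt_rowLen.mp h) (by omega)

theorem addCells_eq (μ : YoungDiagram) :
    addCells μ = insert (0, μ.rowLen 0) ((rmCells μ).image
      (fun c => (c.1 + 1, μ.rowLen (c.1 + 1)))) := by
  ext ⟨i, j⟩
  rw [mem_addCells, isAdd_iff, Finset.mem_insert, Finset.mem_image]
  constructor
  · rintro ⟨rfl, h1 | h1⟩
    · subst h1; exact Or.inl rfl
    · right
      obtain ⟨k, rfl⟩ : ∃ k, i = k + 1 := by
        rcases i with _ | k
        · simp at h1
        · exact ⟨k, rfl⟩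
      refine ⟨(k, μ.rowLen k - 1), ?_, ?_⟩
      · rw [mem_rmCells, isRm_iff]
        simp only [Nat.add_sub_cancel] at h1 ⊢
        omega
      · simp
  · rintro (h | ⟨c, hc, hic⟩)
    · obtain ⟨rfl, rfl⟩ : i = 0 ∧ j = μ.rowLen 0 := by
        constructor <;> [exact congrArg Prod.fst h; exact congrArg Prod.snd h]
      exact ⟨rfl, Or.inl rfl⟩
    · rw [mem_rmCells] at hc
      obtain ⟨a, b⟩ := c
      rw [isRm_iff] at hc
      obtain ⟨rfl, rfl⟩ : i = a + 1 ∧ j = μ.rowLen (a + 1) := by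
        constructor <;> [exact (congrArg Prod.fst hic).symm; exact (congrArg Prod.snd hic).symm]
      refine ⟨rfl, Or.inr ?_⟩
      simp only [Nat.add_sub_cancel]
      omega

theorem card_covs (μ : YoungDiagram) : (covs μ).card = (lcovs μ).card + 1 := by
  have h1 : (covs μ).card = (addCells μ).card := by
    apply Finset.card_image_of_injOn
    intro c hc d hd h
    rw [Finset.mem_coe, mem_addCells] at hc hd
    have hcmem : c ∈ (addYD μ c).cells := by rw [addYD_cells hc]; exact Finset.mem_insert_self _ _
    rw [h, addYD_cells hd] at hcmem
    rcases Finset.mem_insert.mp hcmem with h' | h'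
    · exact h'
    · exact absurd h' (by exact_mod_cast hc.1)
  have h2 : (lcovs μ).card = (rmCells μ).card := by
    apply Finset.card_image_of_injOn
    intro c hc d hd h
    rw [Finset.mem_coe, mem_rmCells] at hc hd
    by_contra hne
    have hcmem : c ∈ (rmYD μ d).cells := by
      rw [rmYD_cells hd]
      exact Finset.mem_erase.mpr ⟨hne, by exact_mod_cast hc.1⟩
    rw [← h, rmYD_cells hc] at hcmem
    exact absurd rfl (Finset.mem_erase.mp hcmem).1
  have h3 : (addCells μ).card = (rmCells μ).card + 1 := by
    rw [addCells_eq]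
    rw [Finset.card_insert_of_notMem, Finset.card_image_of_injOn]
    · intro c hc d hd h
      rw [Finset.mem_coe, mem_rmCells] at hc hd
      obtain ⟨a, b⟩ := c
      obtain ⟨a', b'⟩ := d
      rw [isRm_iff] at hc hd
      have ha : a = a' := by
        have := congrArg Prod.fst h
        simpa using this
      subst ha
      have : b = b' := by omega
      simp [this]
    · intro h
      rw [Finset.mem_image] at h
      obtain ⟨c, _, hc⟩ := h
      have := congrArg Prod.fst hc
      simp at this
  omega


theorem mem_rmYD {lam : YoungDiagram} {c : ℕ × ℕ} (hc : IsRm lam c) {p : ℕ × ℕ} :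
    p ∈ rmYD lam c ↔ p ∈ lam ∧ p ≠ c := by
  have h0 : p ∈ rmYD lam c ↔ p ∈ (rmYD lam c).cells := Iff.rfl
  rw [h0, rmYD_cells hc, Finset.mem_erase]
  simp [and_comm]

theorem rmYD_card' {lam : YoungDiagram} {c : ℕ × ℕ} (hc : IsRm lam c) :
    (rmYD lam c).card = lam.card - 1 := by have := rmYD_card hc; omega

/-- The cell of a SYT containing the maximal entry. -/
noncomputable def topCell {lam : YoungDiagram} (h : 0 < lam.card) (T : SYT lam) : ℕ × ℕ :=
  (exists_entry_eq T h le_rfl).choose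

theorem topCell_mem {lam : YoungDiagram} (h : 0 < lam.card) (T : SYT lam) :
    topCell h T ∈ lam := (exists_entry_eq T h le_rfl).choose_spec.1

theorem topCell_entry {lam : YoungDiagram} (h : 0 < lam.card) (T : SYT lam) :
    T.entry (topCell h T).1 (topCell h T).2 = lam.card :=
  (exists_entry_eq T h le_rfl).choose_spec.2

theorem topCell_eq_iff {lam : YoungDiagram} (h : 0 < lam.card) (T : SYT lam) {c : ℕ × ℕ}
    (hc : c ∈ lam) : topCell h T = c ↔ T.entry c.1 c.2 = lam.card := by
  constructor
  · rintro rfl; exact topCell_entry h T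
  · intro he
    have := T.injOn (topCell h T).1 (topCell h T).2 c.1 c.2
      (by simpa [Prod.mk.eta] using topCell_mem h T) (by simpa [Prod.mk.eta] using hc)
      (by rw [topCell_entry h T, he])
    simpa [Prod.mk.eta] using this

theorem topCell_isRm {lam : YoungDiagram} (h : 0 < lam.card) (T : SYT lam) :
    IsRm lam (topCell h T) := by
  refine ⟨topCell_mem h T, ?_, ?_⟩
  · intro hmem
    have h1 := T.col_lt (topCell h T).1 (topCell h T).2 hmem
    have h2 := T.le_card ((topCell h T).1 + 1) (topCell h T).2
    rw [topCell_entry h T] at h1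
    omega
  · intro hmem
    have h1 := T.row_lt (topCell h T).1 (topCell h T).2 hmem
    have h2 := T.le_card (topCell h T).1 ((topCell h T).2 + 1)
    rw [topCell_entry h T] at h1
    omega

/-- Restriction of a SYT with top entry at `c` to the diagram minus `c`. -/
noncomputable def resSYT {lam : YoungDiagram} {c : ℕ × ℕ} (hc : IsRm lam c) (T : SYT lam)
    (hT : T.entry c.1 c.2 = lam.card) : SYT (rmYD lam c) where
  entry i j := if (i, j) = c then 0 else T.entry i j
  mem_iff i j := by
    by_cases hij : (i, j) = c
    · simp only [hij, if_pos rfl]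
      rw [mem_rmYD hc]
      simp [hij]
    · simp only [if_neg hij]
      rw [mem_rmYD hc, ← T.mem_iff i j]
      simp [hij]
  le_card i j := by
    by_cases hij : (i, j) = c
    · simp [hij]
    · simp only [if_neg hij]
      by_cases hmem : (i, j) ∈ lam
      · have h1 := T.le_card i j
        have h2 : T.entry i j ≠ lam.card := by
          intro he
          exact hij (T.injOn i j c.1 c.2 hmem (by simpa [Prod.mk.eta] using hc.1)
            (by rw [he, hT]))
        have h3 := rmYD_card hc
        omega
      · rw [entry_eq_zero T hmem]
        exact Nat.zero_le _
  injOn i j i' j' hm hm' he := by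
    beta_reduce at he
    rw [mem_rmYD hc] at hm hm'
    rw [if_neg hm.2, if_neg hm'.2] at he
    exact T.injOn i j i' j' hm.1 hm'.1 he
  row_lt i j hm := by
    rw [mem_rmYD hc] at hm
    have hmem : (i, j) ∈ lam := lam.up_left_mem le_rfl (Nat.le_succ j) hm.1
    have hij : (i, j) ≠ c := by
      rintro rfl
      exact hc.2.2 hm.1
    beta_reduce
    rw [if_neg hij, if_neg hm.2]
    exact T.row_lt i j hm.1
  col_lt i j hm := by
    rw [mem_rmYD hc] at hm
    have hij : (i, j) ≠ c := by
      rintro rfl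
      exact hc.2.1 hm.1
    beta_reduce
    rw [if_neg hij, if_neg hm.2]
    exact T.col_lt i j hm.1

/-- Extension of a SYT of `lam - c` to `lam`, placing the max entry at `c`. -/
noncomputable def extSYT {lam : YoungDiagram} {c : ℕ × ℕ} (hc : IsRm lam c)
    (T : SYT (rmYD lam c)) : SYT lam where
  entry i j := if (i, j) = c then lam.card else T.entry i j
  mem_iff i j := by
    have hn := rmYD_card hc
    by_cases hij : (i, j) = c
    · beta_reduce
      rw [if_pos hij]
      constructor
      · intro _; omega
      · intro _; exact hij ▸ hc.1
    · simp only [if_neg hij]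
      rw [← T.mem_iff i j, mem_rmYD hc]
      simp [hij]
  le_card i j := by
    have hn := rmYD_card hc
    by_cases hij : (i, j) = c
    · simp [hij]
    · simp only [if_neg hij]
      have := T.le_card i j
      omega
  injOn i j i' j' hm hm' he := by
    beta_reduce at he
    have hn := rmYD_card hc
    by_cases hij : (i, j) = c <;> by_cases hij' : (i', j') = c
    · rw [hij, hij']
    · rw [if_pos hij, if_neg hij'] at he
      have := T.le_card i' j'
      omega
    · rw [if_neg hij, if_pos hij'] at he
      have := T.le_card i j
      omega
    · rw [if_neg hij, if_neg hij'] at he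
      exact T.injOn i j i' j' ((mem_rmYD hc).mpr ⟨hm, hij⟩) ((mem_rmYD hc).mpr ⟨hm', hij'⟩) he
  row_lt i j hm := by
    have hn := rmYD_card hc
    have hij : (i, j) ≠ c := by
      rintro rfl
      exact hc.2.2 hm
    beta_reduce
    rw [if_neg hij]
    by_cases hij1 : (i, j + 1) = c
    · rw [if_pos hij1]
      have hmem : (i, j) ∈ rmYD lam c :=
        (mem_rmYD hc).mpr ⟨lam.up_left_mem le_rfl (Nat.le_succ j) hm, hij⟩
      have := T.le_card i j
      have := (T.mem_iff i j).mp hmem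
      omega
    · rw [if_neg hij1]
      exact T.row_lt i j ((mem_rmYD hc).mpr ⟨hm, hij1⟩)
  col_lt i j hm := by
    have hn := rmYD_card hc
    have hij : (i, j) ≠ c := by
      rintro rfl
      exact hc.2.1 hm
    beta_reduce
    rw [if_neg hij]
    by_cases hij1 : (i + 1, j) = c
    · rw [if_pos hij1]
      have hmem : (i, j) ∈ rmYD lam c :=
        (mem_rmYD hc).mpr ⟨lam.up_left_mem (Nat.le_succ i) le_rfl hm, hij⟩
      have := T.le_card i j
      have := (T.mem_iff i j).mp hmem
      omega
    · rw [if_neg hij1]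
      exact T.col_lt i j ((mem_rmYD hc).mpr ⟨hm, hij1⟩)

theorem topCell_extSYT {lam : YoungDiagram} (h : 0 < lam.card) {c : ℕ × ℕ} (hc : IsRm lam c)
    (T : SYT (rmYD lam c)) : topCell h (extSYT hc T) = c := by
  rw [topCell_eq_iff h _ hc.1]
  show (if (c.1, c.2) = c then lam.card else T.entry c.1 c.2) = lam.card
  rw [if_pos (Prod.mk.eta)]

/-- The fiber of `topCell` over a removable corner `c` is equivalent to `SYT (rmYD lam c)`. -/
noncomputable def fiberEquiv {lam : YoungDiagram} (h : 0 < lam.card) {c : ℕ × ℕ}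
    (hc : IsRm lam c) : {T : SYT lam // topCell h T = c} ≃ SYT (rmYD lam c) where
  toFun := fun ⟨T, hT⟩ => resSYT hc T ((topCell_eq_iff h T hc.1).mp hT)
  invFun := fun T => ⟨extSYT hc T, topCell_extSYT h hc T⟩
  left_inv := by
    rintro ⟨T, hT⟩
    apply Subtype.ext
    apply ext'
    funext i j
    show (if (i, j) = c then lam.card else if (i, j) = c then 0 else T.entry i j) = T.entry i j
    by_cases hij : (i, j) = c
    · have h1 : T.entry c.1 c.2 = lam.card := (topCell_eq_iff h T hc.1).mp hT
      have h2 : T.entry i j = T.entry c.1 c.2 := by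
        simpa using congrArg (fun p : ℕ × ℕ => T.entry p.1 p.2) hij
      rw [if_pos hij, h2, h1]
    · rw [if_neg hij, if_neg hij]
  right_inv := by
    intro T
    apply ext'
    funext i j
    show (if (i, j) = c then 0 else if (i, j) = c then lam.card else T.entry i j) = T.entry i j
    by_cases hij : (i, j) = c
    · have hnm : (c.1, c.2) ∉ rmYD lam c := by
        rw [mem_rmYD hc]; simp [Prod.mk.eta]
      have h1 : T.entry c.1 c.2 = 0 := entry_eq_zero T hnm
      have h2 : T.entry i j = T.entry c.1 c.2 := by
        simpa using congrArg (fun p : ℕ × ℕ => T.entry p.1 p.2) hij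
      rw [if_pos hij, h2, h1]
    · rw [if_neg hij, if_neg hij]

theorem card_SYT_branch (lam : YoungDiagram) (h : 0 < lam.card) :
    Nat.card (SYT lam) = ∑ c ∈ rmCells lam, Nat.card (SYT (rmYD lam c)) := by
  classical
  letI : Fintype (SYT lam) := Fintype.ofFinite _
  rw [Nat.card_eq_fintype_card, ← Finset.card_univ,
    Finset.card_eq_sum_card_fiberwise (f := topCell h) (t := rmCells lam)
      (fun T _ => mem_rmCells.mpr (topCell_isRm h T))]
  refine Finset.sum_congr rfl fun c hc => ?_
  rw [← Fintype.card_subtype]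
  rw [← Nat.card_eq_fintype_card, Nat.card_congr (fiberEquiv h (mem_rmCells.mp hc))]

theorem rmYD_injOn (lam : YoungDiagram) :
    Set.InjOn (rmYD lam) (rmCells lam) := by
  intro c hc d hd h
  rw [Finset.mem_coe, mem_rmCells] at hc hd
  by_contra hne
  have hcmem : c ∈ (rmYD lam d).cells := by
    rw [rmYD_cells hd]
    exact Finset.mem_erase.mpr ⟨hne, by exact_mod_cast hc.1⟩
  rw [← h, rmYD_cells hc] at hcmem
  exact absurd rfl (Finset.mem_erase.mp hcmem).1

theorem fSYT_branch (lam : YoungDiagram) (h : 0 < lam.card) :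
    fSYT lam = ∑ mu ∈ lcovs lam, fSYT mu := by
  rw [fSYT, card_SYT_branch lam h, lcovs, Finset.sum_image (fun c hc d hd => rmYD_injOn lam hc hd)]
  rfl


theorem card_eq_of_mem_lcovs_covs {lam ρ μ : YoungDiagram} (h1 : ρ ∈ lcovs lam)
    (h2 : μ ∈ covs ρ) : μ.card = lam.card := by
  have a := (mem_lcovs.mp h1).2
  have b := (mem_covs.mp h2).2
  omega

theorem sigma_swap (lam : YoungDiagram) :
    ∑ p ∈ (covs lam).sigma (fun ν => (lcovs ν).erase lam), fSYT p.2
      = ∑ p ∈ (lcovs lam).sigma (fun ρ => (covs ρ).erase lam), fSYT p.2 := by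
  classical
  apply Finset.sum_nbij' (i := fun p => ⟨lam ⊓ p.2, p.2⟩) (j := fun p => ⟨lam ⊔ p.2, p.2⟩)
  · rintro ⟨ν, μ⟩ hp
    rw [Finset.mem_sigma] at hp
    dsimp only at hp
    obtain ⟨hν, hμ⟩ := hp
    rw [Finset.mem_erase] at hμ
    obtain ⟨hne, hμ⟩ := hμ
    obtain ⟨hs1, hc1⟩ := mem_covs.mp hν
    obtain ⟨hs2, hc2⟩ := mem_lcovs.mp hμ
    have hmc : μ.card = lam.card := by omega
    -- lam ⊔ μ = ν
    have hsub : (lam ⊔ μ).cells ⊆ ν.cells := by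
      rw [YoungDiagram.cells_sup]
      exact Finset.union_subset hs1 hs2
    have hlt : lam.cells.card < (lam ⊔ μ).cells.card := by
      apply Finset.card_lt_card
      rw [Finset.ssubset_iff_of_subset (by rw [YoungDiagram.cells_sup]; exact Finset.subset_union_left)]
      by_contra hcon
      push_neg at hcon
      have : μ.cells ⊆ lam.cells := by
        intro x hx
        exact hcon x (by rw [YoungDiagram.cells_sup]; exact Finset.mem_union_right _ hx)
      have : μ = lam := YoungDiagram.ext (Finset.eq_of_subset_of_card_le this (le_of_eq hmc.symm))
      exact hne this
    have hsup : lam ⊔ μ = ν := by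
      apply YoungDiagram.ext
      apply Finset.eq_of_subset_of_card_le hsub
      have : (lam ⊔ μ).cells.card ≤ ν.cells.card := Finset.card_le_card hsub
      have hc1' : ν.cells.card = lam.cells.card + 1 := hc1
      omega
    have hinter : lam.cells.card = (lam ⊓ μ).cells.card + 1 := by
      have hui := Finset.card_union_add_card_inter lam.cells μ.cells
      have h1 : (lam ⊔ μ).cells.card = lam.cells.card + 1 := by
        rw [hsup]; exact hc1
      have h3 : (lam ⊔ μ).cells.card = (lam.cells ∪ μ.cells).card := by
        rw [YoungDiagram.cells_sup]
      have h4 : (lam ⊓ μ).cells.card = (lam.cells ∩ μ.cells).card := by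
        rw [YoungDiagram.cells_inf]
      have hmc' : μ.cells.card = lam.cells.card := hmc
      omega
    rw [Finset.mem_sigma, Finset.mem_erase]
    refine ⟨mem_lcovs.mpr ⟨?_, hinter⟩, hne, mem_covs.mpr ⟨?_, ?_⟩⟩
    · rw [YoungDiagram.cells_inf]; exact Finset.inter_subset_left
    · rw [YoungDiagram.cells_inf]; exact Finset.inter_subset_right
    · show μ.cells.card = (lam ⊓ μ).cells.card + 1
      have hmc' : μ.cells.card = lam.cells.card := hmc
      omega
  · rintro ⟨ρ, μ⟩ hp
    rw [Finset.mem_sigma] at hp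
    dsimp only at hp
    obtain ⟨hρ, hμ⟩ := hp
    rw [Finset.mem_erase] at hμ
    obtain ⟨hne, hμ⟩ := hμ
    obtain ⟨hs1, hc1⟩ := mem_lcovs.mp hρ
    obtain ⟨hs2, hc2⟩ := mem_covs.mp hμ
    have hmc : μ.cells.card = lam.cells.card := by
      have hc1' : lam.cells.card = ρ.cells.card + 1 := hc1
      have hc2' : μ.cells.card = ρ.cells.card + 1 := hc2
      omega
    have hsubi : ρ.cells ⊆ (lam ⊓ μ).cells := by
      rw [YoungDiagram.cells_inf]
      exact Finset.subset_inter hs1 hs2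
    have hlt : (lam ⊓ μ).cells.card < lam.cells.card := by
      apply Finset.card_lt_card
      rw [Finset.ssubset_iff_of_subset (by rw [YoungDiagram.cells_inf]; exact Finset.inter_subset_left)]
      by_contra hcon
      push_neg at hcon
      have hlm : lam.cells ⊆ μ.cells := by
        intro x hx
        have := hcon x hx
        rw [YoungDiagram.cells_inf, Finset.mem_inter] at this
        exact this.2
      have : lam = μ := YoungDiagram.ext (Finset.eq_of_subset_of_card_le hlm (le_of_eq hmc))
      exact hne this.symm
    have hinf : lam ⊓ μ = ρ := by
      apply YoungDiagram.ext
      apply (Finset.eq_of_subset_of_card_le hsubi ?_).symm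
      have hc1' : lam.cells.card = ρ.cells.card + 1 := hc1
      omega
    have hcup : (lam ⊔ μ).cells.card = lam.cells.card + 1 := by
      have hui := Finset.card_union_add_card_inter lam.cells μ.cells
      have h2 : (lam ⊓ μ).cells.card = ρ.cells.card := by rw [hinf]
      have h3 : (lam ⊔ μ).cells.card = (lam.cells ∪ μ.cells).card := by
        rw [YoungDiagram.cells_sup]
      have h4 : (lam ⊓ μ).cells.card = (lam.cells ∩ μ.cells).card := by
        rw [YoungDiagram.cells_inf]
      have hc1' : lam.cells.card = ρ.cells.card + 1 := hc1
      omega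
    rw [Finset.mem_sigma, Finset.mem_erase]
    refine ⟨mem_covs.mpr ⟨?_, hcup⟩, hne, mem_lcovs.mpr ⟨?_, ?_⟩⟩
    · rw [YoungDiagram.cells_sup]; exact Finset.subset_union_left
    · rw [YoungDiagram.cells_sup]; exact Finset.subset_union_right
    · show (lam ⊔ μ).cells.card = μ.cells.card + 1
      rw [hcup, hmc]
  · rintro ⟨ν, μ⟩ hp
    rw [Finset.mem_sigma] at hp
    dsimp only at hp
    obtain ⟨hν, hμ⟩ := hp
    rw [Finset.mem_erase] at hμ
    obtain ⟨hne, hμ⟩ := hμ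
    obtain ⟨hs1, hc1⟩ := mem_covs.mp hν
    obtain ⟨hs2, hc2⟩ := mem_lcovs.mp hμ
    have hmc : μ.cells.card = lam.cells.card := by
      have hc1' : ν.cells.card = lam.cells.card + 1 := hc1
      have hc2' : ν.cells.card = μ.cells.card + 1 := hc2
      omega
    have hsub : (lam ⊔ μ).cells ⊆ ν.cells := by
      rw [YoungDiagram.cells_sup]
      exact Finset.union_subset hs1 hs2
    have hlt : lam.cells.card < (lam ⊔ μ).cells.card := by
      apply Finset.card_lt_card
      rw [Finset.ssubset_iff_of_subset (by rw [YoungDiagram.cells_sup]; exact Finset.subset_union_left)]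
      by_contra hcon
      push_neg at hcon
      have hml : μ.cells ⊆ lam.cells := by
        intro x hx
        exact hcon x (by rw [YoungDiagram.cells_sup]; exact Finset.mem_union_right _ hx)
      have : μ = lam := YoungDiagram.ext (Finset.eq_of_subset_of_card_le hml (le_of_eq hmc.symm))
      exact hne this
    have hsup : lam ⊔ μ = ν := by
      apply YoungDiagram.ext
      apply Finset.eq_of_subset_of_card_le hsub
      have : (lam ⊔ μ).cells.card ≤ ν.cells.card := Finset.card_le_card hsub
      have hc1' : ν.cells.card = lam.cells.card + 1 := hc1
      omega
    show (⟨lam ⊔ μ, μ⟩ : Σ _ : YoungDiagram, YoungDiagram) = ⟨ν, μ⟩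
    rw [hsup]
  · rintro ⟨ρ, μ⟩ hp
    rw [Finset.mem_sigma] at hp
    dsimp only at hp
    obtain ⟨hρ, hμ⟩ := hp
    rw [Finset.mem_erase] at hμ
    obtain ⟨hne, hμ⟩ := hμ
    obtain ⟨hs1, hc1⟩ := mem_lcovs.mp hρ
    obtain ⟨hs2, hc2⟩ := mem_covs.mp hμ
    have hmc : μ.cells.card = lam.cells.card := by
      have hc1' : lam.cells.card = ρ.cells.card + 1 := hc1
      have hc2' : μ.cells.card = ρ.cells.card + 1 := hc2
      omega
    have hsubi : ρ.cells ⊆ (lam ⊓ μ).cells := by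
      rw [YoungDiagram.cells_inf]
      exact Finset.subset_inter hs1 hs2
    have hlt : (lam ⊓ μ).cells.card < lam.cells.card := by
      apply Finset.card_lt_card
      rw [Finset.ssubset_iff_of_subset (by rw [YoungDiagram.cells_inf]; exact Finset.inter_subset_left)]
      by_contra hcon
      push_neg at hcon
      have hlm : lam.cells ⊆ μ.cells := by
        intro x hx
        have := hcon x hx
        rw [YoungDiagram.cells_inf, Finset.mem_inter] at this
        exact this.2
      have : lam = μ := YoungDiagram.ext (Finset.eq_of_subset_of_card_le hlm (le_of_eq hmc))
      exact hne this.symm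
    have hinf : lam ⊓ μ = ρ := by
      apply YoungDiagram.ext
      apply (Finset.eq_of_subset_of_card_le hsubi ?_).symm
      have hc1' : lam.cells.card = ρ.cells.card + 1 := hc1
      omega
    show (⟨lam ⊓ μ, μ⟩ : Σ _ : YoungDiagram, YoungDiagram) = ⟨ρ, μ⟩
    rw [hinf]
  · rintro ⟨ν, μ⟩ _
    rfl

theorem key : ∀ n : ℕ, ∀ lam : YoungDiagram, lam.card = n →
    (lam.card + 1) * fSYT lam = ∑ ν ∈ covs lam, fSYT ν := by
  intro n
  induction n using Nat.strong_induction_on with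
  | _ n IH =>
  intro lam hn
  classical
  have hlammem : ∀ ν ∈ covs lam, lam ∈ lcovs ν := by
    intro ν hν
    obtain ⟨hs, hc⟩ := mem_covs.mp hν
    exact mem_lcovs.mpr ⟨hs, hc⟩
  have E1 : ∑ ν ∈ covs lam, fSYT ν
      = (covs lam).card * fSYT lam
        + ∑ ν ∈ covs lam, ∑ μ ∈ (lcovs ν).erase lam, fSYT μ := by
    have h : ∀ ν ∈ covs lam, fSYT ν = fSYT lam + ∑ μ ∈ (lcovs ν).erase lam, fSYT μ := by
      intro ν hν
      rw [fSYT_branch ν (by have := (mem_covs.mp hν).2; omega),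
        ← Finset.add_sum_erase _ _ (hlammem ν hν)]
    rw [Finset.sum_congr rfl h, Finset.sum_add_distrib, Finset.sum_const, smul_eq_mul]
  have hσ1 : ∑ ν ∈ covs lam, ∑ μ ∈ (lcovs ν).erase lam, fSYT μ
      = ∑ p ∈ (covs lam).sigma (fun ν => (lcovs ν).erase lam), fSYT p.2 :=
    Finset.sum_sigma' _ _ _
  have hσ2 : ∑ p ∈ (lcovs lam).sigma (fun ρ => (covs ρ).erase lam), fSYT p.2
      = ∑ ρ ∈ lcovs lam, ∑ μ ∈ (covs ρ).erase lam, fSYT μ :=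
    (Finset.sum_sigma' (lcovs lam) (fun ρ => (covs ρ).erase lam) (fun _ μ => fSYT μ)).symm
  have hIH : ∀ ρ ∈ lcovs lam, fSYT lam + ∑ μ ∈ (covs ρ).erase lam, fSYT μ
      = lam.card * fSYT ρ := by
    intro ρ hρ
    obtain ⟨hs, hc⟩ := mem_lcovs.mp hρ
    have hthis := IH ρ.card (by omega) ρ rfl
    have hmem : lam ∈ covs ρ := mem_covs.mpr ⟨hs, hc⟩
    rw [Finset.add_sum_erase _ _ hmem, ← hthis]
    congr 1
    omega
  have E2 : (lcovs lam).card * fSYT lam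
        + ∑ ρ ∈ lcovs lam, ∑ μ ∈ (covs ρ).erase lam, fSYT μ
      = lam.card * fSYT lam := by
    have h := Finset.sum_congr rfl hIH
    rw [Finset.sum_add_distrib, Finset.sum_const, smul_eq_mul, ← Finset.mul_sum] at h
    rcases Nat.eq_zero_or_pos lam.card with hz | hpos
    · have hemp : lcovs lam = ∅ := by
        rw [Finset.eq_empty_iff_forall_notMem]
        intro ρ hρ
        have := (mem_lcovs.mp hρ).2
        omega
      simp [hemp, hz]
    · rw [← fSYT_branch lam hpos] at h
      exact h
  calc (lam.card + 1) * fSYT lam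
      = lam.card * fSYT lam + fSYT lam := by ring
    _ = ((lcovs lam).card * fSYT lam
          + ∑ ρ ∈ lcovs lam, ∑ μ ∈ (covs ρ).erase lam, fSYT μ) + fSYT lam := by rw [E2]
    _ = ((lcovs lam).card + 1) * fSYT lam
          + ∑ ρ ∈ lcovs lam, ∑ μ ∈ (covs ρ).erase lam, fSYT μ := by ring
    _ = (covs lam).card * fSYT lam
          + ∑ ρ ∈ lcovs lam, ∑ μ ∈ (covs ρ).erase lam, fSYT μ := by rw [card_covs lam]
    _ = (covs lam).card * fSYT lam
          + ∑ ν ∈ covs lam, ∑ μ ∈ (lcovs ν).erase lam, fSYT μ := by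
        rw [hσ1, sigma_swap lam, hσ2]
    _ = ∑ ν ∈ covs lam, fSYT ν := E1.symm

end SYTaux

/-- $(n+1) f^λ = Σ_{ν : λ ↗ ν} f^ν$. -/
theorem sum_fSYT_covers (lam : YoungDiagram) :
    (lam.card + 1) * fSYT lam = ∑ᶠ (ν : YoungDiagram) (_ : YDcovers lam ν), fSYT ν := by
  classical
  have hkey := SYTaux.key lam.card lam rfl
  have hset : {ν : YoungDiagram | YDcovers lam ν} = ↑(SYTaux.covs lam) := by
    ext ν
    simp only [Set.mem_setOf_eq, Finset.coe_sort_coe, Finset.mem_coe]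
    rw [SYTaux.mem_covs]
    exact Iff.rfl
  calc (lam.card + 1) * fSYT lam
      = ∑ ν ∈ SYTaux.covs lam, fSYT ν := hkey
    _ = ∑ᶠ ν ∈ (↑(SYTaux.covs lam) : Set YoungDiagram), fSYT ν :=
        (finsum_mem_coe_finset _ _).symm
    _ = ∑ᶠ (ν : YoungDiagram) (_ : YDcovers lam ν), fSYT ν := by rw [← hset]; rfl
end

section
/- For each n ≥ 1, Σ_{λ ⊢ n} (f^λ)² = n!, where the sum is over all Young diagrams λ with n boxes and f^λ is the number of standard Young tableaux of shape λ. -/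
open Nat

namespace SYTAux

theorem SYT.ext' {μ : YoungDiagram} {T S : SYT μ} (h : T.entry = S.entry) : T = S := by
  cases T; cases S; simp_all

theorem entry_eq_zero {μ : YoungDiagram} (T : SYT μ) {i j : ℕ} (h : (i, j) ∉ μ) :
    T.entry i j = 0 := by
  have := (T.mem_iff i j).not.mp h
  omega

theorem entry_pos {μ : YoungDiagram} (T : SYT μ) {i j : ℕ} (h : (i, j) ∈ μ) :
    1 ≤ T.entry i j := (T.mem_iff i j).mp h

instance instFiniteSYT (μ : YoungDiagram) : Finite (SYT μ) := by
  have : Function.Injective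
      (fun T : SYT μ => (fun c : μ.cells => (⟨T.entry c.1.1 c.1.2, Nat.lt_succ_of_le (T.le_card c.1.1 c.1.2)⟩ : Fin (μ.card + 1)))) := by
    intro T S h
    apply SYT.ext'
    funext i j
    by_cases hij : (i, j) ∈ μ
    · have := congrFun h ⟨(i, j), hij⟩
      simpa using congrArg Fin.val this
    · rw [entry_eq_zero T hij, entry_eq_zero S hij]
  exact Finite.of_injective _ this

instance : Unique (SYT (⊥ : YoungDiagram)) where
  default :=
    { entry := fun _ _ => 0
      mem_iff := by simp [YoungDiagram.notMem_bot]
      le_card := by simp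
      injOn := by simp [YoungDiagram.notMem_bot]
      row_lt := by simp [YoungDiagram.notMem_bot]
      col_lt := by simp [YoungDiagram.notMem_bot] }
  uniq T := by
    apply SYT.ext'
    funext i j
    have h1 := T.le_card i j
    have h0 : (⊥ : YoungDiagram).card = 0 := rfl
    simp only [h0, Nat.le_zero] at h1
    simp [h1]

theorem fSYT_bot : fSYT ⊥ = 1 := Nat.card_eq_one_iff_unique.mpr ⟨inferInstance, inferInstance⟩

-- monotonicity
theorem entry_le_col {μ : YoungDiagram} (T : SYT μ) (i j : ℕ) :
    ∀ k, (i + k, j) ∈ μ → T.entry i j ≤ T.entry (i + k) j := by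
  intro k
  induction k with
  | zero => intro _; exact le_rfl
  | succ k ih =>
    intro h
    rw [show i + (k+1) = i + k + 1 from rfl] at h ⊢
    have hk : (i + k, j) ∈ μ := μ.up_left_mem (by omega) le_rfl h
    have := T.col_lt (i + k) j h
    have := ih hk
    omega

theorem entry_le_row {μ : YoungDiagram} (T : SYT μ) (i j : ℕ) :
    ∀ k, (i, j + k) ∈ μ → T.entry i j ≤ T.entry i (j + k) := by
  intro k
  induction k with
  | zero => intro _; exact le_rfl
  | succ k ih =>
    intro h
    rw [show j + (k+1) = j + k + 1 from rfl] at h ⊢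
    have hk : (i, j + k) ∈ μ := μ.up_left_mem le_rfl (by omega) h
    have := T.row_lt i (j + k) h
    have := ih hk
    omega

theorem entry_lt_of_lt {μ : YoungDiagram} (T : SYT μ) {c d : ℕ × ℕ}
    (hd : d ∈ μ) (h1 : c.1 ≤ d.1) (h2 : c.2 ≤ d.2) (hne : c ≠ d) :
    T.entry c.1 c.2 < T.entry d.1 d.2 := by
  obtain ⟨a, b⟩ := c
  obtain ⟨a', b'⟩ := d
  simp only at h1 h2 ⊢
  have hmid : (a', b) ∈ μ := μ.up_left_mem le_rfl h2 hd
  rcases Nat.lt_or_ge a a' with h | h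
  · -- strict in column
    have hcol : T.entry a b < T.entry a' b := by
      obtain ⟨k, rfl⟩ : ∃ k, a' = a + (k + 1) := ⟨a' - a - 1, by omega⟩
      rw [show a + (k+1) = a + k + 1 from rfl] at hmid ⊢
      have h1' : (a + k, b) ∈ μ := μ.up_left_mem (by omega) le_rfl hmid
      have := entry_le_col T a b k h1'
      have := T.col_lt (a + k) b hmid
      omega
    have hrow := entry_le_row T a' b (b' - b) (by rwa [show b + (b' - b) = b' by omega])
    rw [show b + (b' - b) = b' by omega] at hrow
    omega
  · have ha : a = a' := le_antisymm (by omega) h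
    subst ha
    have hb : b < b' := by
      rcases Nat.lt_or_ge b b' with h' | h'
      · exact h'
      · exact absurd (by omega : b = b') (by simpa using hne)
    obtain ⟨k, rfl⟩ : ∃ k, b' = b + (k + 1) := ⟨b' - b - 1, by omega⟩
    rw [show b + (k+1) = b + k + 1 from rfl] at hd ⊢
    have h1' : (a, b + k) ∈ μ := μ.up_left_mem le_rfl (by omega) hd
    have := entry_le_row T a b k h1'
    have := T.row_lt a (b + k) hd
    omega


variable {μ : YoungDiagram} {c d : ℕ × ℕ}

def Addable (μ : YoungDiagram) (c : ℕ × ℕ) : Prop :=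
  c ∉ μ ∧ IsLowerSet (↑(insert c μ.cells) : Set (ℕ × ℕ))

def Removable (μ : YoungDiagram) (c : ℕ × ℕ) : Prop :=
  c ∈ μ ∧ IsLowerSet (↑(μ.cells.erase c) : Set (ℕ × ℕ))

open Classical in
noncomputable def addYD (μ : YoungDiagram) (c : ℕ × ℕ) : YoungDiagram :=
  if h : IsLowerSet (↑(insert c μ.cells) : Set (ℕ × ℕ)) then ⟨insert c μ.cells, h⟩ else μ

open Classical in
noncomputable def remYD (μ : YoungDiagram) (c : ℕ × ℕ) : YoungDiagram :=
  if h : IsLowerSet (↑(μ.cells.erase c) : Set (ℕ × ℕ)) then ⟨μ.cells.erase c, h⟩ else μ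

theorem addYD_cells (h : Addable μ c) : (addYD μ c).cells = insert c μ.cells := by
  rw [addYD, dif_pos h.2]


theorem remYD_cells (h : Removable μ c) : (remYD μ c).cells = μ.cells.erase c := by
  rw [remYD, dif_pos h.2]

theorem mem_addYD (h : Addable μ c) {x : ℕ × ℕ} : x ∈ addYD μ c ↔ x = c ∨ x ∈ μ := by
  rw [← YoungDiagram.mem_cells, addYD_cells h]; simp

theorem mem_remYD (h : Removable μ c) {x : ℕ × ℕ} : x ∈ remYD μ c ↔ x ≠ c ∧ x ∈ μ := by
  rw [← YoungDiagram.mem_cells, remYD_cells h]; simp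

theorem card_addYD (h : Addable μ c) : (addYD μ c).card = μ.card + 1 := by
  show (addYD μ c).cells.card = μ.cells.card + 1
  rw [addYD_cells h, Finset.card_insert_of_notMem (by simpa using h.1)]

theorem card_remYD (h : Removable μ c) : μ.card = (remYD μ c).card + 1 := by
  show μ.cells.card = (remYD μ c).cells.card + 1
  rw [remYD_cells h, Finset.card_erase_of_mem (by simpa using h.1)]
  have : 1 ≤ μ.cells.card := Finset.card_pos.mpr ⟨c, by simpa using h.1⟩
  omega

theorem rem_add (h : Addable μ c) : remYD (addYD μ c) c = μ := by
  apply YoungDiagram.ext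
  have h2 : Removable (addYD μ c) c := by
    constructor
    · rw [mem_addYD h]; left; rfl
    · rw [addYD_cells h, Finset.erase_insert (by simpa using h.1)]
      exact μ.isLowerSet
  rw [remYD_cells h2, addYD_cells h, Finset.erase_insert (by simpa using h.1)]

theorem removable_add (h : Addable μ c) : Removable (addYD μ c) c := by
  constructor
  · rw [mem_addYD h]; left; rfl
  · rw [addYD_cells h, Finset.erase_insert (by simpa using h.1)]
    exact μ.isLowerSet

theorem add_rem (h : Removable μ c) : addYD (remYD μ c) c = μ := by
  have h2 : Addable (remYD μ c) c := by
    constructor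
    · rw [mem_remYD h]; simp
    · rw [remYD_cells h, Finset.insert_erase (by simpa using h.1)]
      exact μ.isLowerSet
  apply YoungDiagram.ext
  rw [addYD_cells h2, remYD_cells h, Finset.insert_erase (by simpa using h.1)]

theorem addable_rem (h : Removable μ c) : Addable (remYD μ c) c := by
  constructor
  · rw [mem_remYD h]; simp
  · rw [remYD_cells h, Finset.insert_erase (by simpa using h.1)]
    exact μ.isLowerSet

/-! ### the swap lemmas -/

theorem lowerM_addable (hc : c ∉ μ) (hd : d ∈ μ)
    (hM : IsLowerSet (↑(insert c (μ.cells.erase d)) : Set (ℕ × ℕ))) : Addable μ c := by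
  refine ⟨hc, ?_⟩
  intro b a hab hb
  simp only [Finset.coe_insert, Set.mem_insert_iff, Finset.mem_coe, YoungDiagram.mem_cells]
    at hb ⊢
  rcases hb with rfl | hb
  · have : a ∈ (↑(insert b (μ.cells.erase d)) : Set (ℕ × ℕ)) := hM hab (by simp)
    simp only [Finset.coe_insert, Set.mem_insert_iff, Finset.mem_coe, Finset.mem_erase]
      at this
    rcases this with rfl | ⟨_, hx⟩
    · left; rfl
    · right; exact hx
  · right; exact μ.isLowerSet hab hb

theorem lowerM_removable (hc : c ∉ μ) (hd : d ∈ μ)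
    (hM : IsLowerSet (↑(insert c (μ.cells.erase d)) : Set (ℕ × ℕ))) : Removable μ d := by
  refine ⟨hd, ?_⟩
  intro b a hab hb
  simp only [Finset.coe_erase, Set.mem_diff, Finset.mem_coe, YoungDiagram.mem_cells,
    Set.mem_singleton_iff] at hb ⊢
  have hbM : b ∈ (↑(insert c (μ.cells.erase d)) : Set (ℕ × ℕ)) := by
    simp only [Finset.coe_insert, Set.mem_insert_iff, Finset.mem_coe, Finset.mem_erase]
    right; exact ⟨hb.2, by simpa using hb.1⟩
  have haM : a ∈ (↑(insert c (μ.cells.erase d)) : Set (ℕ × ℕ)) := hM hab hbM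
  simp only [Finset.coe_insert, Set.mem_insert_iff, Finset.mem_coe, Finset.mem_erase] at haM
  rcases haM with rfl | ⟨hxd, hx⟩
  · exfalso; exact hc (μ.isLowerSet hab hb.1)
  · exact ⟨by simpa using hx, hxd⟩

theorem swap_M_of_left (hcd : c ≠ d) (hA : Addable μ c) (hR : Removable (addYD μ c) d) :
    IsLowerSet (↑(insert c (μ.cells.erase d)) : Set (ℕ × ℕ)) := by
  have := hR.2
  rwa [addYD_cells hA, Finset.erase_insert_of_ne hcd] at this

theorem swap_M_of_right (hcd : c ≠ d) (hR : Removable μ d) (hA : Addable (remYD μ d) c) :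
    IsLowerSet (↑(insert c (μ.cells.erase d)) : Set (ℕ × ℕ)) := by
  have := hA.2
  rwa [remYD_cells hR] at this

theorem swap_left_of_M (hc : c ∉ μ) (hd : d ∈ μ) (hcd : c ≠ d)
    (hM : IsLowerSet (↑(insert c (μ.cells.erase d)) : Set (ℕ × ℕ))) :
    Addable μ c ∧ Removable (addYD μ c) d := by
  have hA := lowerM_addable hc hd hM
  refine ⟨hA, ?_, ?_⟩
  · rw [mem_addYD hA]; right; exact hd
  · rw [addYD_cells hA, Finset.erase_insert_of_ne hcd]; exact hM

theorem swap_right_of_M (hc : c ∉ μ) (hd : d ∈ μ) (hcd : c ≠ d)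
    (hM : IsLowerSet (↑(insert c (μ.cells.erase d)) : Set (ℕ × ℕ))) :
    Removable μ d ∧ Addable (remYD μ d) c := by
  have hR := lowerM_removable hc hd hM
  refine ⟨hR, ?_, ?_⟩
  · rw [mem_remYD hR]; exact fun h => hc (h.2)
  · rw [remYD_cells hR]; exact hM

theorem swap_eq (hcd : c ≠ d) (hA : Addable μ c) (hR : Removable (addYD μ c) d)
    (hR' : Removable μ d) (hA' : Addable (remYD μ d) c) :
    remYD (addYD μ c) d = addYD (remYD μ d) c := by
  apply YoungDiagram.ext
  rw [remYD_cells hR, addYD_cells hA, addYD_cells hA', remYD_cells hR',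
    Finset.erase_insert_of_ne hcd]


theorem addable_iff {i j : ℕ} :
    Addable μ (i, j) ↔ j = μ.rowLen i ∧ (i = 0 ∨ μ.rowLen i < μ.rowLen (i - 1)) := by
  constructor
  · rintro ⟨hc, hl⟩
    rw [YoungDiagram.mem_iff_lt_rowLen] at hc
    push_neg at hc
    have hj : j = μ.rowLen i := by
      rcases Nat.eq_zero_or_pos j with rfl | hj0
      · omega
      · -- (i, j-1) ∈ insert, ≠ c so ∈ μ
        have : ((i, j - 1) : ℕ × ℕ) ∈ (↑(insert (i,j) μ.cells) : Set (ℕ × ℕ)) :=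
          hl (a := ((i, j) : ℕ × ℕ)) (Prod.mk_le_mk.mpr ⟨le_rfl, by omega⟩) (by simp)
        simp only [Finset.coe_insert, Set.mem_insert_iff, Finset.mem_coe,
          YoungDiagram.mem_cells] at this
        rcases this with h | h
        · exfalso; have := congrArg Prod.snd h; simp at this; omega
        · rw [YoungDiagram.mem_iff_lt_rowLen] at h; omega
    refine ⟨hj, ?_⟩
    rcases Nat.eq_zero_or_pos i with rfl | hi0
    · left; rfl
    · right
      have : ((i - 1, j) : ℕ × ℕ) ∈ (↑(insert (i,j) μ.cells) : Set (ℕ × ℕ)) :=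
        hl (a := ((i, j) : ℕ × ℕ)) (Prod.mk_le_mk.mpr ⟨by omega, le_rfl⟩) (by simp)
      simp only [Finset.coe_insert, Set.mem_insert_iff, Finset.mem_coe,
        YoungDiagram.mem_cells] at this
      rcases this with h | h
      · exfalso; have := congrArg Prod.fst h; simp at this; omega
      · rw [YoungDiagram.mem_iff_lt_rowLen] at h; omega
  · rintro ⟨hj, hi⟩
    constructor
    · rw [YoungDiagram.mem_iff_lt_rowLen]; omega
    · intro b a hab hb
      simp only [Finset.coe_insert, Set.mem_insert_iff, Finset.mem_coe,
        YoungDiagram.mem_cells] at hb ⊢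
      obtain ⟨a1, a2⟩ := a
      obtain ⟨b1, b2⟩ := b
      rw [Prod.mk_le_mk] at hab
      rcases hb with hbc | hb
      · have e1 : b1 = i := congrArg Prod.fst hbc
        have e2 : b2 = j := congrArg Prod.snd hbc
        by_cases hac : (a1, a2) = ((i, j) : ℕ × ℕ)
        · left; exact hac
        · right
          rw [YoungDiagram.mem_iff_lt_rowLen]
          rcases Nat.lt_or_ge a1 i with h1 | h1
          · have h3 : μ.rowLen (i - 1) ≤ μ.rowLen a1 := μ.rowLen_anti _ _ (by omega)
            omega
          · have e : a1 = i := by omega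
            have ha2 : a2 ≠ j := by
              intro h; exact hac (by rw [e, h])
            rw [e]
            omega
      · right; exact μ.isLowerSet (Prod.mk_le_mk.mpr hab) hb

theorem removable_iff {i j : ℕ} :
    Removable μ (i, j) ↔ j + 1 = μ.rowLen i ∧ μ.rowLen (i + 1) ≤ j := by
  constructor
  · rintro ⟨hc, hl⟩
    rw [YoungDiagram.mem_iff_lt_rowLen] at hc
    constructor
    · by_contra h
      have h2 : j + 1 < μ.rowLen i := by omega
      have hmem : ((i, j + 1) : ℕ × ℕ) ∈ (↑(μ.cells.erase (i, j)) : Set (ℕ × ℕ)) := by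
        simp only [Finset.coe_erase, Set.mem_diff, Finset.mem_coe, YoungDiagram.mem_cells,
          Set.mem_singleton_iff]
        refine ⟨?_, ?_⟩
        · rw [YoungDiagram.mem_iff_lt_rowLen]; omega
        · intro hh; have := congrArg Prod.snd hh; simp at this
      have : ((i, j) : ℕ × ℕ) ∈ (↑(μ.cells.erase (i, j)) : Set (ℕ × ℕ)) :=
        hl (Prod.mk_le_mk.mpr ⟨le_rfl, by omega⟩) hmem
      simp at this
    · by_contra h
      have h2 : j < μ.rowLen (i + 1) := by omega
      have hmem : ((i + 1, j) : ℕ × ℕ) ∈ (↑(μ.cells.erase (i, j)) : Set (ℕ × ℕ)) := by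
        simp only [Finset.coe_erase, Set.mem_diff, Finset.mem_coe, YoungDiagram.mem_cells,
          Set.mem_singleton_iff]
        refine ⟨?_, ?_⟩
        · rw [YoungDiagram.mem_iff_lt_rowLen]; omega
        · intro hh; have := congrArg Prod.fst hh; simp at this
      have : ((i, j) : ℕ × ℕ) ∈ (↑(μ.cells.erase (i, j)) : Set (ℕ × ℕ)) :=
        hl (Prod.mk_le_mk.mpr ⟨by omega, le_rfl⟩) hmem
      simp at this
  · rintro ⟨h1, h2⟩
    constructor
    · rw [YoungDiagram.mem_iff_lt_rowLen]; omega
    · intro b a hab hb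
      simp only [Finset.coe_erase, Set.mem_diff, Finset.mem_coe, YoungDiagram.mem_cells,
        Set.mem_singleton_iff] at hb ⊢
      obtain ⟨a1, a2⟩ := a
      obtain ⟨b1, b2⟩ := b
      rw [Prod.mk_le_mk] at hab
      refine ⟨μ.isLowerSet (Prod.mk_le_mk.mpr hab) hb.1, ?_⟩
      intro hh
      have e1 : a1 = i := congrArg Prod.fst hh
      have e2 : a2 = j := congrArg Prod.snd hh
      have hbmem := hb.1
      rw [YoungDiagram.mem_iff_lt_rowLen] at hbmem
      apply hb.2
      rcases Nat.lt_or_ge b1 (i + 1) with hb1 | hb1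
      · have e : b1 = i := by omega
        rw [e] at hbmem
        simp only [Prod.mk.injEq]
        omega
      · exfalso
        have := μ.rowLen_anti _ _ hb1
        omega

open Classical in
noncomputable def addables (μ : YoungDiagram) : Finset (ℕ × ℕ) :=
  (Finset.range (μ.card + 1) ×ˢ Finset.range (μ.card + 1)).filter (fun c => Addable μ c)

open Classical in
noncomputable def removables (μ : YoungDiagram) : Finset (ℕ × ℕ) :=
  μ.cells.filter (fun c => Removable μ c)

theorem mem_removables {x : ℕ × ℕ} : x ∈ removables μ ↔ Removable μ x := by
  classical
  rw [removables]
  simp only [Finset.mem_filter, YoungDiagram.mem_cells]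
  constructor
  · exact fun h => by convert h.2
  · intro h; exact ⟨h.1, by convert h⟩

theorem rowLen_le_card (μ : YoungDiagram) (i : ℕ) : μ.rowLen i ≤ μ.card := by
  have : μ.row i ⊆ μ.cells := by
    intro x hx
    rw [YoungDiagram.mem_row_iff] at hx
    simpa using hx.1
  have := Finset.card_le_card this
  rw [← YoungDiagram.rowLen_eq_card] at this
  exact this

theorem col_le_card (μ : YoungDiagram) {i j : ℕ} (h : (i, j) ∈ μ) : i < μ.card := by
  -- the column above (i,j) gives i+1 distinct cells
  have hsub : (Finset.range (i + 1)).image (fun k => (k, j)) ⊆ μ.cells := by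
    intro x hx
    simp only [Finset.mem_image, Finset.mem_range] at hx
    obtain ⟨k, hk, rfl⟩ := hx
    simpa using μ.up_left_mem (by omega) le_rfl h
  have hcard := Finset.card_le_card hsub
  rw [Finset.card_image_of_injective _ (fun a b hab => by simpa using congrArg Prod.fst hab)] at hcard
  simp only [Finset.card_range] at hcard
  show i < μ.cells.card
  omega

theorem mem_addables {x : ℕ × ℕ} : x ∈ addables μ ↔ Addable μ x := by
  classical
  rw [addables]
  simp only [Finset.mem_filter, Finset.mem_product, Finset.mem_range]
  constructor
  · exact fun h => by convert h.2
  · intro h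
    refine ⟨⟨?_, ?_⟩, by convert h⟩
    · obtain ⟨i, j⟩ := x
      rw [addable_iff] at h
      rcases Nat.eq_zero_or_pos i with rfl | hi
      · omega
      · have : (i - 1, j) ∈ μ := by
          rw [YoungDiagram.mem_iff_lt_rowLen]
          rcases h.2 with h' | h'
          · omega
          · omega
        have := col_le_card μ this
        omega
    · obtain ⟨i, j⟩ := x
      rw [addable_iff] at h
      have := rowLen_le_card μ i
      omega

theorem bot_mem_addables (μ : YoungDiagram) : ((0 : ℕ), μ.rowLen 0) ∈ addables μ := by
  rw [mem_addables, addable_iff]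
  exact ⟨rfl, Or.inl rfl⟩

theorem card_addables (μ : YoungDiagram) :
    (addables μ).card = (removables μ).card + 1 := by
  have key : (removables μ).card = ((addables μ).erase (0, μ.rowLen 0)).card := by
    apply Finset.card_bij (fun (c : ℕ × ℕ) _ => ((c.1 + 1, μ.rowLen (c.1 + 1)) : ℕ × ℕ))
    · rintro ⟨i, j⟩ ha
      rw [mem_removables, removable_iff] at ha
      rw [Finset.mem_erase, mem_addables]
      constructor
      · intro h; have := congrArg Prod.fst h; simp at this
      · rw [addable_iff]
        refine ⟨rfl, Or.inr ?_⟩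
        simp only [Nat.add_sub_cancel]
        omega
    · rintro ⟨i, j⟩ hi ⟨i', j'⟩ hi' he
      have h1 : i + 1 = i' + 1 := congrArg Prod.fst he
      rw [mem_removables, removable_iff] at hi hi'
      have : i = i' := by omega
      subst this
      have : j = j' := by omega
      rw [this]
    · rintro ⟨i, j⟩ hb
      rw [Finset.mem_erase, mem_addables, addable_iff] at hb
      obtain ⟨hne, hj, hcor⟩ := hb
      have hi0 : i ≠ 0 := by
        intro h; subst h; exact hne (by rw [hj])
      rcases hcor with h | h
      · exact absurd h hi0
      refine ⟨(i - 1, μ.rowLen (i - 1) - 1), ?_, ?_⟩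
      · rw [mem_removables, removable_iff]
        constructor
        · omega
        · rw [show i - 1 + 1 = i by omega]
          omega
      · have : i - 1 + 1 = i := by omega
        rw [this, hj]
  rw [key, Finset.card_erase_of_mem (bot_mem_addables μ)]
  have : 0 < (addables μ).card := Finset.card_pos.mpr ⟨_, bot_mem_addables μ⟩
  omega


/-! ### Branching -/

theorem exists_max_cell {ν : YoungDiagram} (T : SYT ν) (h1 : 1 ≤ ν.card) :
    ∃ c : ℕ × ℕ, c ∈ ν ∧ T.entry c.1 c.2 = ν.card := by
  classical
  have hinj : Function.Injective (fun c : ν.cells =>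
      (⟨T.entry c.1.1 c.1.2 - 1, by
        have h2 := T.le_card c.1.1 c.1.2
        have h3 := entry_pos T (μ := ν) (i := c.1.1) (j := c.1.2) c.2
        omega⟩ : Fin ν.card)) := by
    rintro ⟨⟨a, b⟩, ha⟩ ⟨⟨a', b'⟩, hb⟩ he
    have he' : T.entry a b - 1 = T.entry a' b' - 1 := congrArg Fin.val he
    have h3 := entry_pos T (μ := ν) (i := a) (j := b) ha
    have h4 := entry_pos T (μ := ν) (i := a') (j := b') hb
    have : T.entry a b = T.entry a' b' := by omega
    exact Subtype.ext (T.injOn a b a' b' ha hb this)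
  have hbij : Function.Bijective (fun c : ν.cells =>
      (⟨T.entry c.1.1 c.1.2 - 1, by
        have h2 := T.le_card c.1.1 c.1.2
        have h3 := entry_pos T (μ := ν) (i := c.1.1) (j := c.1.2) c.2
        omega⟩ : Fin ν.card)) := by
    rw [Fintype.bijective_iff_injective_and_card]
    exact ⟨hinj, by simp [Fintype.card_coe]⟩
  obtain ⟨⟨c, hc⟩, hcv⟩ := hbij.2 ⟨ν.card - 1, by omega⟩
  refine ⟨c, hc, ?_⟩
  have hv := congrArg Fin.val hcv
  simp only at hv
  have h3 := entry_pos T (μ := ν) (i := c.1) (j := c.2) hc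
  have h2 := T.le_card c.1 c.2
  omega

theorem removable_of_max {ν : YoungDiagram} {T : SYT ν} {c : ℕ × ℕ}
    (hc : c ∈ ν) (hmax : T.entry c.1 c.2 = ν.card) : Removable ν c := by
  refine ⟨hc, ?_⟩
  intro b a hab hb
  simp only [Finset.coe_erase, Set.mem_diff, Finset.mem_coe, YoungDiagram.mem_cells,
    Set.mem_singleton_iff] at hb ⊢
  refine ⟨ν.isLowerSet hab hb.1, ?_⟩
  rintro rfl
  have hne : a ≠ b := fun h => hb.2 h.symm
  have := entry_lt_of_lt T hb.1 hab.1 hab.2 hne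
  have := T.le_card b.1 b.2
  omega

/-- Remove the largest entry from a SYT. -/
noncomputable def restrict {ν : YoungDiagram} (T : SYT ν) (c : ℕ × ℕ)
    (hc : c ∈ ν) (hmax : T.entry c.1 c.2 = ν.card) : SYT (remYD ν c) :=
  have hR : Removable ν c := removable_of_max hc hmax
  have hcard : ν.card = (remYD ν c).card + 1 := card_remYD hR
  { entry := fun i j => if (i, j) = c then 0 else T.entry i j
    mem_iff := by
      intro i j
      show (i, j) ∈ remYD ν c ↔ 1 ≤ if ((i, j) : ℕ × ℕ) = c then 0 else T.entry i j
      rw [mem_remYD hR]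
      by_cases h : ((i, j) : ℕ × ℕ) = c
      · simp [h]
      · rw [if_neg h]
        simp only [ne_eq, h, not_false_iff, true_and]
        exact T.mem_iff i j
    le_card := by
      intro i j
      show (if ((i, j) : ℕ × ℕ) = c then 0 else T.entry i j) ≤ (remYD ν c).card
      by_cases h : ((i, j) : ℕ × ℕ) = c
      · rw [if_pos h]; omega
      · rw [if_neg h]
        by_cases hm : ((i, j) : ℕ × ℕ) ∈ ν
        · have h2 := T.le_card i j
          have h3 : T.entry i j ≠ ν.card := by
            intro he
            exact h (T.injOn i j c.1 c.2 hm hc (by rw [he, hmax]))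
          omega
        · rw [entry_eq_zero T hm]; omega
    injOn := by
      intro i j i' j' hij hij' he
      rw [mem_remYD hR] at hij hij'
      have he' : T.entry i j = T.entry i' j' := by
        have : (if ((i, j) : ℕ × ℕ) = c then 0 else T.entry i j) =
            (if ((i', j') : ℕ × ℕ) = c then 0 else T.entry i' j') := he
        rwa [if_neg hij.1, if_neg hij'.1] at this
      exact T.injOn i j i' j' hij.2 hij'.2 he'
    row_lt := by
      intro i j hmem
      have hmem0 : ((i, j) : ℕ × ℕ) ∈ remYD ν c := (remYD ν c).up_left_mem le_rfl (by omega) hmem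
      rw [mem_remYD hR] at hmem hmem0
      show (if ((i, j) : ℕ × ℕ) = c then 0 else T.entry i j) <
        (if ((i, j + 1) : ℕ × ℕ) = c then 0 else T.entry i (j + 1))
      rw [if_neg hmem.1, if_neg hmem0.1]
      exact T.row_lt i j hmem.2
    col_lt := by
      intro i j hmem
      have hmem0 : ((i, j) : ℕ × ℕ) ∈ remYD ν c := (remYD ν c).up_left_mem (by omega) le_rfl hmem
      rw [mem_remYD hR] at hmem hmem0
      show (if ((i, j) : ℕ × ℕ) = c then 0 else T.entry i j) <
        (if ((i + 1, j) : ℕ × ℕ) = c then 0 else T.entry (i + 1) j)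
      rw [if_neg hmem.1, if_neg hmem0.1]
      exact T.col_lt i j hmem.2 }

/-- Add back the largest entry. -/
noncomputable def extend {ν : YoungDiagram} {c : ℕ × ℕ} (hR : Removable ν c)
    (T : SYT (remYD ν c)) : SYT ν :=
  have hcard : ν.card = (remYD ν c).card + 1 := card_remYD hR
  { entry := fun i j => if (i, j) = c then ν.card else T.entry i j
    mem_iff := by
      intro i j
      show (i, j) ∈ ν ↔ 1 ≤ if ((i, j) : ℕ × ℕ) = c then ν.card else T.entry i j
      by_cases h : ((i, j) : ℕ × ℕ) = c
      · rw [if_pos h]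
        exact ⟨fun _ => by omega, fun _ => by rw [h]; exact hR.1⟩
      · rw [if_neg h]
        rw [← T.mem_iff i j, mem_remYD hR]
        simp [h]
    le_card := by
      intro i j
      show (if ((i, j) : ℕ × ℕ) = c then ν.card else T.entry i j) ≤ ν.card
      by_cases h : ((i, j) : ℕ × ℕ) = c
      · rw [if_pos h]
      · rw [if_neg h]
        have := T.le_card i j
        omega
    injOn := by
      intro i j i' j' hij hij' he
      have he' : (if ((i, j) : ℕ × ℕ) = c then ν.card else T.entry i j) =
          (if ((i', j') : ℕ × ℕ) = c then ν.card else T.entry i' j') := he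
      by_cases h : ((i, j) : ℕ × ℕ) = c <;> by_cases h' : ((i', j') : ℕ × ℕ) = c
      · exact h.trans h'.symm
      · rw [if_pos h, if_neg h'] at he'
        have := T.le_card i' j'
        omega
      · rw [if_neg h, if_pos h'] at he'
        have := T.le_card i j
        omega
      · rw [if_neg h, if_neg h'] at he'
        have m1 : ((i, j) : ℕ × ℕ) ∈ remYD ν c := by rw [mem_remYD hR]; exact ⟨h, hij⟩
        have m2 : ((i', j') : ℕ × ℕ) ∈ remYD ν c := by rw [mem_remYD hR]; exact ⟨h', hij'⟩
        exact T.injOn i j i' j' m1 m2 he'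
    row_lt := by
      intro i j hmem
      show (if ((i, j) : ℕ × ℕ) = c then ν.card else T.entry i j) <
        (if ((i, j + 1) : ℕ × ℕ) = c then ν.card else T.entry i (j + 1))
      by_cases h' : ((i, j + 1) : ℕ × ℕ) = c
      · rw [if_pos h']
        have h : ((i, j) : ℕ × ℕ) ≠ c := by
          intro hh
          rw [← h'] at hh
          have := congrArg Prod.snd hh
          simp at this
        rw [if_neg h]
        have : ((i, j) : ℕ × ℕ) ∈ remYD ν c := by
          rw [mem_remYD hR]
          exact ⟨h, ν.up_left_mem le_rfl (by omega) hmem⟩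
        have := T.le_card i j
        omega
      · rw [if_neg h']
        have m2 : ((i, j + 1) : ℕ × ℕ) ∈ remYD ν c := by rw [mem_remYD hR]; exact ⟨h', hmem⟩
        have m1 : ((i, j) : ℕ × ℕ) ∈ remYD ν c := (remYD ν c).up_left_mem le_rfl (by omega) m2
        rw [if_neg ((mem_remYD hR).mp m1).1]
        exact T.row_lt i j m2
    col_lt := by
      intro i j hmem
      show (if ((i, j) : ℕ × ℕ) = c then ν.card else T.entry i j) <
        (if ((i + 1, j) : ℕ × ℕ) = c then ν.card else T.entry (i + 1) j)
      by_cases h' : ((i + 1, j) : ℕ × ℕ) = c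
      · rw [if_pos h']
        have h : ((i, j) : ℕ × ℕ) ≠ c := by
          intro hh
          rw [← h'] at hh
          have := congrArg Prod.fst hh
          simp at this
        rw [if_neg h]
        have : ((i, j) : ℕ × ℕ) ∈ remYD ν c := by
          rw [mem_remYD hR]
          exact ⟨h, ν.up_left_mem (by omega) le_rfl hmem⟩
        have := T.le_card i j
        omega
      · rw [if_neg h']
        have m2 : ((i + 1, j) : ℕ × ℕ) ∈ remYD ν c := by rw [mem_remYD hR]; exact ⟨h', hmem⟩
        have m1 : ((i, j) : ℕ × ℕ) ∈ remYD ν c := (remYD ν c).up_left_mem (by omega) le_rfl m2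
        rw [if_neg ((mem_remYD hR).mp m1).1]
        exact T.col_lt i j m2 }

theorem extend_entry {ν : YoungDiagram} {c : ℕ × ℕ} (hR : Removable ν c)
    (T : SYT (remYD ν c)) (i j : ℕ) :
    (extend hR T).entry i j = if (i, j) = c then ν.card else T.entry i j := rfl

theorem restrict_entry {ν : YoungDiagram} (T : SYT ν) (c : ℕ × ℕ)
    (hc : c ∈ ν) (hmax : T.entry c.1 c.2 = ν.card) (i j : ℕ) :
    (restrict T c hc hmax).entry i j = if (i, j) = c then 0 else T.entry i j := rfl


noncomputable def maxCell {ν : YoungDiagram} (T : SYT ν) (h1 : 1 ≤ ν.card) : ℕ × ℕ :=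
  Classical.choose (exists_max_cell T h1)

theorem maxCell_mem {ν : YoungDiagram} (T : SYT ν) (h1 : 1 ≤ ν.card) :
    maxCell T h1 ∈ ν := (Classical.choose_spec (exists_max_cell T h1)).1

theorem maxCell_entry {ν : YoungDiagram} (T : SYT ν) (h1 : 1 ≤ ν.card) :
    T.entry (maxCell T h1).1 (maxCell T h1).2 = ν.card :=
  (Classical.choose_spec (exists_max_cell T h1)).2

theorem extend_bijective (ν : YoungDiagram) (h1 : 1 ≤ ν.card) :
    Function.Bijective (fun p : Σ d : {d : ℕ × ℕ // d ∈ removables ν}, SYT (remYD ν d.1) =>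
      extend (mem_removables.mp p.1.2) p.2) := by
  constructor
  · rintro ⟨⟨d, hd⟩, T'⟩ ⟨⟨d', hd'⟩, T''⟩ he
    have hR : Removable ν d := mem_removables.mp hd
    have hR' : Removable ν d' := mem_removables.mp hd'
    simp only at he
    have key : ∀ i j, (extend hR T').entry i j = (extend hR' T'').entry i j := by
      intro i j; rw [he]
    have hdd : d = d' := by
      by_contra hne
      have k1 := key d'.1 d'.2
      rw [extend_entry, extend_entry, if_pos (Prod.mk.eta), if_neg] at k1
      · have h2 : T'.entry d'.1 d'.2 ≤ (remYD ν d).card := T'.le_card d'.1 d'.2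
        have h3 := card_remYD hR
        omega
      · rw [Prod.mk.eta]; exact fun hh => hne hh.symm
    subst hdd
    have hTT : T' = T'' := by
      apply SYT.ext'
      funext i j
      by_cases h : ((i, j) : ℕ × ℕ) = d
      · have n1 : ((i, j) : ℕ × ℕ) ∉ remYD ν d := by
          rw [mem_remYD hR]; intro hh; exact hh.1 h
        rw [entry_eq_zero T' n1, entry_eq_zero T'' n1]
      · have k1 := key i j
        rwa [extend_entry, extend_entry, if_neg h, if_neg h] at k1
    rw [hTT]
  · intro T
    refine ⟨⟨⟨maxCell T h1, mem_removables.mpr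
        (removable_of_max (maxCell_mem T h1) (maxCell_entry T h1))⟩,
      restrict T (maxCell T h1) (maxCell_mem T h1) (maxCell_entry T h1)⟩, ?_⟩
    apply SYT.ext'
    funext i j
    rw [extend_entry, restrict_entry]
    by_cases h : ((i, j) : ℕ × ℕ) = maxCell T h1
    · rw [if_pos h, ← maxCell_entry T h1, ← h]
    · rw [if_neg h, if_neg h]

theorem fSYT_branch (ν : YoungDiagram) (h1 : 1 ≤ ν.card) :
    fSYT ν = ∑ d ∈ removables ν, fSYT (remYD ν d) := by
  classical
  rw [fSYT, ← Nat.card_congr (Equiv.ofBijective _ (extend_bijective ν h1))]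
  letI : Fintype {d : ℕ × ℕ // d ∈ removables ν} := FinsetCoe.fintype _
  letI : ∀ d : {d : ℕ × ℕ // d ∈ removables ν}, Fintype (SYT (remYD ν d.1)) :=
    fun d => Fintype.ofFinite _
  rw [Nat.card_eq_fintype_card, Fintype.card_sigma]
  rw [← Finset.sum_coe_sort (removables ν) (fun d => fSYT (remYD ν d))]
  congr 1
  funext d
  rw [fSYT, Nat.card_eq_fintype_card]

theorem removables_empty_of_card_zero {μ : YoungDiagram} (h0 : μ.card = 0) :
    removables μ = ∅ := by
  rw [Finset.eq_empty_iff_forall_notMem]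
  intro d hd
  have h1 : d ∈ μ.cells := (mem_removables.mp hd).1
  have : μ.cells = ∅ := Finset.card_eq_zero.mp h0
  rw [this] at h1
  simp at h1

theorem sum_addables_aux : ∀ n (μ : YoungDiagram), μ.card = n →
    ∑ c ∈ addables μ, fSYT (addYD μ c) = (μ.card + 1) * fSYT μ := by
  intro n
  induction n using Nat.strong_induction_on with
  | _ n ih =>
  intro μ hn
  classical
  have step1 : ∀ c ∈ addables μ, fSYT (addYD μ c) =
      fSYT μ + ∑ d ∈ (removables (addYD μ c)).erase c, fSYT (remYD (addYD μ c) d) := by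
    intro c hc
    have hA := mem_addables.mp hc
    rw [fSYT_branch (addYD μ c) (by rw [card_addYD hA]; omega)]
    have hcrem : c ∈ removables (addYD μ c) := mem_removables.mpr (removable_add hA)
    rw [← Finset.add_sum_erase _ _ hcrem, rem_add hA]
  rw [Finset.sum_congr rfl step1, Finset.sum_add_distrib, Finset.sum_const, smul_eq_mul]
  have hX : ∑ c ∈ addables μ, ∑ d ∈ (removables (addYD μ c)).erase c, fSYT (remYD (addYD μ c) d)
      = ∑ d ∈ removables μ, ∑ c ∈ (addables (remYD μ d)).erase d, fSYT (addYD (remYD μ d) c) := by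
    rw [Finset.sum_sigma', Finset.sum_sigma']
    refine Finset.sum_nbij' (fun p => ⟨p.2, p.1⟩) (fun p => ⟨p.2, p.1⟩) ?_ ?_ ?_ ?_ ?_
    · rintro ⟨c, d⟩ hp
      rw [Finset.mem_sigma] at hp
      obtain ⟨hc, hd0⟩ := hp
      rw [Finset.mem_erase] at hd0
      obtain ⟨hdc, hd⟩ := hd0
      have hA := mem_addables.mp hc
      have hR := mem_removables.mp hd
      have hdmu : d ∈ μ := by
        have h2 := hR.1
        rw [mem_addYD hA] at h2
        rcases h2 with h | h
        · exact absurd h hdc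
        · exact h
      have hM := swap_M_of_left (fun h => hdc h.symm) hA hR
      obtain ⟨hR', hA'⟩ := swap_right_of_M hA.1 hdmu (fun h => hdc h.symm) hM
      rw [Finset.mem_sigma, Finset.mem_erase]
      exact ⟨mem_removables.mpr hR', fun h => hdc h.symm, mem_addables.mpr hA'⟩
    · rintro ⟨d, c⟩ hp
      rw [Finset.mem_sigma] at hp
      obtain ⟨hd, hc0⟩ := hp
      rw [Finset.mem_erase] at hc0
      obtain ⟨hcd, hc⟩ := hc0
      have hR' := mem_removables.mp hd
      have hA' := mem_addables.mp hc
      have hcmu : c ∉ μ := by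
        intro hmem
        exact hA'.1 ((mem_remYD hR').mpr ⟨hcd, hmem⟩)
      have hM := swap_M_of_right hcd hR' hA'
      obtain ⟨hA, hR⟩ := swap_left_of_M hcmu hR'.1 hcd hM
      rw [Finset.mem_sigma, Finset.mem_erase]
      exact ⟨mem_addables.mpr hA, fun h => hcd h.symm, mem_removables.mpr hR⟩
    · rintro ⟨c, d⟩ _; rfl
    · rintro ⟨d, c⟩ _; rfl
    · rintro ⟨c, d⟩ hp
      rw [Finset.mem_sigma] at hp
      obtain ⟨hc, hd0⟩ := hp
      rw [Finset.mem_erase] at hd0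
      obtain ⟨hdc, hd⟩ := hd0
      have hA := mem_addables.mp hc
      have hR := mem_removables.mp hd
      have hdmu : d ∈ μ := by
        have h2 := hR.1
        rw [mem_addYD hA] at h2
        rcases h2 with h | h
        · exact absurd h hdc
        · exact h
      have hM := swap_M_of_left (fun h => hdc h.symm) hA hR
      obtain ⟨hR', hA'⟩ := swap_right_of_M hA.1 hdmu (fun h => hdc h.symm) hM
      exact congrArg fSYT (swap_eq (fun h => hdc h.symm) hA hR hR' hA')
  rw [hX]
  have hY : ∀ d ∈ removables μ,
      (∑ c ∈ (addables (remYD μ d)).erase d, fSYT (addYD (remYD μ d) c)) + fSYT μ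
        = μ.card * fSYT (remYD μ d) := by
    intro d hd
    have hR := mem_removables.mp hd
    have hcard := card_remYD hR
    have hA' : Addable (remYD μ d) d := addable_rem hR
    have hd' : d ∈ addables (remYD μ d) := mem_addables.mpr hA'
    have hih : ∑ c ∈ addables (remYD μ d), fSYT (addYD (remYD μ d) c)
        = ((remYD μ d).card + 1) * fSYT (remYD μ d) :=
      ih (remYD μ d).card (by omega) _ rfl
    rw [← Finset.sum_erase_add _ _ hd', add_rem hR] at hih
    rw [hih]
    congr 1
    omega
  rcases Nat.eq_zero_or_pos μ.card with h0 | hpos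
  · have hrem := removables_empty_of_card_zero h0
    rw [hrem, Finset.sum_empty, card_addables, hrem]
    simp [h0]
  · have e1 : (∑ d ∈ removables μ, ∑ c ∈ (addables (remYD μ d)).erase d,
        fSYT (addYD (remYD μ d) c)) + (removables μ).card * fSYT μ
          = μ.card * fSYT μ := by
      calc (∑ d ∈ removables μ, ∑ c ∈ (addables (remYD μ d)).erase d,
            fSYT (addYD (remYD μ d) c)) + (removables μ).card * fSYT μ
          = ∑ d ∈ removables μ, ((∑ c ∈ (addables (remYD μ d)).erase d,
            fSYT (addYD (remYD μ d) c)) + fSYT μ) := by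
            rw [Finset.sum_add_distrib, Finset.sum_const, smul_eq_mul]
        _ = ∑ d ∈ removables μ, μ.card * fSYT (remYD μ d) := Finset.sum_congr rfl hY
        _ = μ.card * ∑ d ∈ removables μ, fSYT (remYD μ d) := (Finset.mul_sum _ _ _).symm
        _ = μ.card * fSYT μ := by rw [← fSYT_branch μ hpos]
    rw [card_addables]
    calc ((removables μ).card + 1) * fSYT μ +
          ∑ d ∈ removables μ, ∑ c ∈ (addables (remYD μ d)).erase d, fSYT (addYD (remYD μ d) c)
        = ((∑ d ∈ removables μ, ∑ c ∈ (addables (remYD μ d)).erase d,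
            fSYT (addYD (remYD μ d) c)) + (removables μ).card * fSYT μ) + fSYT μ := by ring
      _ = μ.card * fSYT μ + fSYT μ := by rw [e1]
      _ = (μ.card + 1) * fSYT μ := by ring

/-! ### Diagrams of given size -/

theorem row_le_card (μ : YoungDiagram) {i j : ℕ} (h : (i, j) ∈ μ) : j < μ.card := by
  have hsub : (Finset.range (j + 1)).image (fun k => (i, k)) ⊆ μ.cells := by
    intro x hx
    simp only [Finset.mem_image, Finset.mem_range] at hx
    obtain ⟨k, hk, rfl⟩ := hx
    simpa using μ.up_left_mem le_rfl (by omega) h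
  have hcard := Finset.card_le_card hsub
  rw [Finset.card_image_of_injective _ (fun a b hab => by simpa using congrArg Prod.snd hab)]
    at hcard
  simp only [Finset.card_range] at hcard
  show j < μ.cells.card
  omega

open Classical in
noncomputable def ofCellsYD (s : Finset (ℕ × ℕ)) : YoungDiagram :=
  if h : IsLowerSet (↑s : Set (ℕ × ℕ)) then ⟨s, h⟩ else ⊥

open Classical in
noncomputable def diagrams (n : ℕ) : Finset YoungDiagram :=
  ((Finset.range (n + 1) ×ˢ Finset.range (n + 1)).powerset.image ofCellsYD).filter
    (fun μ => μ.card = n)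

theorem mem_diagrams {n : ℕ} {μ : YoungDiagram} : μ ∈ diagrams n ↔ μ.card = n := by
  classical
  constructor
  · intro h
    have := (Finset.mem_filter.mp h).2
    simpa using this
  · intro h
    rw [diagrams]
    rw [Finset.mem_filter]
    refine ⟨Finset.mem_image.mpr ⟨μ.cells, ?_, ?_⟩, by simpa using h⟩
    · rw [Finset.mem_powerset]
      rintro ⟨i, j⟩ hx
      have hmem : ((i, j) : ℕ × ℕ) ∈ μ := hx
      have hi := col_le_card μ hmem
      have hj := row_le_card μ hmem
      rw [Finset.mem_product, Finset.mem_range, Finset.mem_range]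
      omega
    · rw [ofCellsYD, dif_pos μ.isLowerSet]

theorem diagrams_zero : diagrams 0 = {⊥} := by
  ext μ
  rw [mem_diagrams, Finset.mem_singleton]
  constructor
  · intro h
    apply YoungDiagram.ext
    rw [YoungDiagram.cells_bot]
    exact Finset.card_eq_zero.mp h
  · rintro rfl
    show (⊥ : YoungDiagram).cells.card = 0
    rw [YoungDiagram.cells_bot]
    rfl

theorem diagrams_step (n : ℕ) :
    ∑ ν ∈ diagrams (n + 1), fSYT ν * fSYT ν
      = (n + 1) * ∑ μ ∈ diagrams n, fSYT μ * fSYT μ := by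
  classical
  have h1 : ∀ ν ∈ diagrams (n + 1), fSYT ν * fSYT ν
      = ∑ d ∈ removables ν, fSYT (remYD ν d) * fSYT ν := by
    intro ν hν
    have hc : 1 ≤ ν.card := by rw [mem_diagrams.mp hν]; omega
    nth_rewrite 1 [fSYT_branch ν hc]
    rw [Finset.sum_mul]
  rw [Finset.sum_congr rfl h1, Finset.sum_sigma'
    (σ := fun _ : YoungDiagram => ℕ × ℕ)]
  have h2 : ∑ p ∈ (diagrams (n + 1)).sigma (fun ν => removables ν),
        fSYT (remYD p.1 p.2) * fSYT p.1
      = ∑ p ∈ (diagrams n).sigma (fun μ => addables μ),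
        fSYT p.1 * fSYT (addYD p.1 p.2) := by
    refine Finset.sum_nbij' (fun p => ⟨remYD p.1 p.2, p.2⟩) (fun p => ⟨addYD p.1 p.2, p.2⟩)
      ?_ ?_ ?_ ?_ ?_
    · rintro ⟨ν, d⟩ hp
      simp only [Finset.mem_sigma] at hp
      obtain ⟨hν, hd⟩ := hp
      have hR := mem_removables.mp hd
      have hcard := card_remYD hR
      simp only [Finset.mem_sigma]
      constructor
      · rw [mem_diagrams]
        have := mem_diagrams.mp hν
        omega
      · exact mem_addables.mpr (addable_rem hR)
    · rintro ⟨μ, c⟩ hp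
      simp only [Finset.mem_sigma] at hp
      obtain ⟨hμ, hc⟩ := hp
      have hA := mem_addables.mp hc
      have hcard := card_addYD hA
      simp only [Finset.mem_sigma]
      constructor
      · rw [mem_diagrams]
        have := mem_diagrams.mp hμ
        omega
      · exact mem_removables.mpr (removable_add hA)
    · rintro ⟨ν, d⟩ hp
      simp only [Finset.mem_sigma] at hp
      have hR := mem_removables.mp hp.2
      exact Sigma.ext (add_rem hR) HEq.rfl
    · rintro ⟨μ, c⟩ hp
      simp only [Finset.mem_sigma] at hp
      have hA := mem_addables.mp hp.2
      exact Sigma.ext (rem_add hA) HEq.rfl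
    · rintro ⟨ν, d⟩ hp
      simp only [Finset.mem_sigma] at hp
      have hR := mem_removables.mp hp.2
      show fSYT (remYD ν d) * fSYT ν = fSYT (remYD ν d) * fSYT (addYD (remYD ν d) d)
      rw [add_rem hR]
  rw [h2, Finset.sum_sigma]
  have h3 : ∀ μ ∈ diagrams n, ∑ c ∈ addables μ, fSYT μ * fSYT (addYD μ c)
      = (n + 1) * (fSYT μ * fSYT μ) := by
    intro μ hμ
    rw [← Finset.mul_sum, sum_addables_aux μ.card μ rfl, mem_diagrams.mp hμ]
    ring
  rw [Finset.sum_congr rfl h3, ← Finset.mul_sum]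

theorem diagrams_sum_factorial : ∀ m : ℕ, ∑ μ ∈ diagrams m, fSYT μ ^ 2 = m ! := by
  intro m
  induction m with
  | zero =>
    rw [diagrams_zero, Finset.sum_singleton, fSYT_bot]
    rfl
  | succ k ihk =>
    have hs := diagrams_step k
    simp only [← pow_two] at hs
    rw [hs, ihk, Nat.factorial_succ]

end SYTAux

open SYTAux in
/-- $Σ_{λ ⊢ n} (f^λ)^2 = n!$. -/
theorem sum_fSYT_sq (n : ℕ) (hn : 1 ≤ n) :
    ∑ᶠ (lam : YoungDiagram) (_ : lam.card = n), (fSYT lam) ^ 2 = n ! := by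
  have hset : {x : YoungDiagram | x.card = n} = (↑(diagrams n) : Set YoungDiagram) := by
    ext x
    simp [mem_diagrams]
  show (∑ᶠ lam ∈ {x : YoungDiagram | x.card = n}, (fSYT lam) ^ 2) = Nat.factorial n
  rw [hset, finsum_mem_coe_finset]
  exact diagrams_sum_factorial n
end

section
/- Let a = (a₁,...,a_l) be a sequence of distinct reals and let b < b' be reals distinct from the aᵢ. Denote by Rec(s) the position of the last box added by Robinson–Schensted insertion of the sequence s, and define (x₁,y₁) ⪯ (x₂,y₂) iff x₁ ≤ x₂ and y₁ ≥ y₂. Then: (a) Rec(a b) ≺ Rec(a b b'); (b) Rec(a b') ≻ Rec(a b' b); (c) Rec(a b) ⪯ Rec(a b'); (d) Rec(a b') ⪯ Rec(a b b'). -/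
/-- Robinson–Schensted row insertion of `x` into a row: replace the leftmost
entry larger than `x`, which gets bumped, or append `x` at the end. -/
noncomputable def rowInsert (x : ℝ) : List ℝ → List ℝ × Option ℝ
  | [] => ([x], none)
  | y :: ys =>
    if x < y then (x :: ys, some y)
    else
      let p := rowInsert x ys
      (y :: p.1, p.2)

/-- Insertion of `x` into the rows `i, i+1, …` of the tableau `T` (given as its
list of rows), with fuel; returns the new tableau and the `(row, column)`
position of the newly created box. -/
noncomputable def insertTab : ℕ → (ℕ → List ℝ) → ℕ → ℝ → (ℕ → List ℝ) × ℕ × ℕ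
  | 0, T, i, _ => (T, i, 0)
  | fuel + 1, T, i, x =>
    match rowInsert x (T i) with
    | (r, none) => (Function.update T i r, i, (T i).length)
    | (r, some y) => insertTab fuel (Function.update T i r) (i + 1) y

/-- Robinson–Schensted insertion of a whole sequence, returning the insertion
tableau (as its list of rows) together with the list of the positions of the
boxes added at the successive insertion steps. -/
noncomputable def RSsteps (xs : List ℝ) : (ℕ → List ℝ) × List (ℕ × ℕ) :=
  xs.foldl
    (fun acc x =>
      let r := insertTab (xs.length + 1) acc.1 0 x
      (r.1, acc.2 ++ [r.2]))
    (fun _ => [], [])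

/-- The `(row, column)` position of the box added by the last insertion step. -/
noncomputable def RecPos (xs : List ℝ) : ℕ × ℕ := ((RSsteps xs).2).getLastD (0, 0)

/-- The Robinson–Schensted shape of a sequence, as the function of row lengths. -/
noncomputable def RSshape (xs : List ℝ) : ℕ → ℕ := fun i => ((RSsteps xs).1 i).length

/-- The recording tableau of a sequence: the entry at `(row i, column j)` is the
number of the insertion step at which this box was added (`0` if it is never added). -/
noncomputable def RecTab (xs : List ℝ) : ℕ → ℕ → ℕ := fun i j =>
  if (i, j) ∈ (RSsteps xs).2 then (RSsteps xs).2.idxOf (i, j) + 1 else 0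

/-- The partial order `⪯` on boxes: positions are `(row, column)`, and
`(x₁,y₁) ⪯ (x₂,y₂)` iff `x₁ ≤ x₂` and `y₁ ≥ y₂` in `(column, row)`-coordinates. -/
def pOrd (p q : ℕ × ℕ) : Prop := p.2 ≤ q.2 ∧ q.1 ≤ p.1

lemma rowInsert_append (x : ℝ) (R : List ℝ) (h : ∀ y ∈ R, ¬ x < y) :
    rowInsert x R = (R ++ [x], none) := by
  induction R with
  | nil => simp [rowInsert]
  | cons y ys ih =>
    simp only [rowInsert]
    rw [if_neg (h y (by simp))]
    simp [ih (fun z hz => h z (by simp [hz]))]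

lemma rowInsert_bump (x : ℝ) (R : List ℝ) (hs : R.Pairwise (· < ·)) (hx : x ∉ R)
    (h : ∃ y ∈ R, x < y) :
    ∃ c0 : ℕ, ∃ hc : c0 < R.length,
      rowInsert x R = (R.set c0 x, some (R[c0])) ∧
      (∀ k (hk : k < R.length), k < c0 → R[k] < x) ∧
      x < R[c0] ∧ c0 = R.countP (fun y => decide (y ≤ x)) := by
  induction R with
  | nil => simp at h
  | cons y ys ih =>
    by_cases hxy : x < y
    · refine ⟨0, by simp, ?_, by omega, by simpa, ?_⟩
      · simp [rowInsert, hxy]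
      · have : ∀ z ∈ y :: ys, ¬ z ≤ x := by
          intro z hz
          rcases List.mem_cons.1 hz with rfl | hz
          · exact not_le.2 hxy
          · exact not_le.2 (lt_trans hxy ((List.pairwise_cons.1 hs).1 z hz))
        rw [List.countP_eq_zero.2 (by intro z hz; simpa using this z hz)]
    · have hyx : y < x := by
        rcases lt_or_eq_of_le (not_lt.1 hxy) with h' | h'
        · exact h'
        · exact absurd h'.symm (by simp at hx; tauto)
      have hys : ∃ z ∈ ys, x < z := by
        rcases h with ⟨z, hz, hzx⟩
        rcases List.mem_cons.1 hz with rfl | hz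
        · exact absurd hzx hxy
        · exact ⟨z, hz, hzx⟩
      obtain ⟨c0, hc, heq, hlt, hgt, hcnt⟩ :=
        ih (List.pairwise_cons.1 hs).2 (by simp at hx; tauto) hys
      refine ⟨c0 + 1, by simpa using hc, ?_, ?_, by simpa using hgt, ?_⟩
      · simp only [rowInsert, if_neg hxy, heq]
        simp
      · intro k hk hkc
        rcases k with _ | k
        · simpa using hyx
        · simpa using hlt k (by simpa using hk) (by omega)
      · rw [List.countP_cons_of_pos (by simpa using hyx.le), hcnt]

lemma sorted_concat' (l : List ℝ) (x : ℝ) (h : l.Pairwise (· < ·)) (h2 : ∀ y ∈ l, y < x) :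
    (l ++ [x]).Pairwise (· < ·) := by
  rw [List.pairwise_append]
  exact ⟨h, List.pairwise_singleton _ x, fun a ha b hb => by
    rw [List.mem_singleton] at hb; subst hb; exact h2 a ha⟩

lemma sorted_get_lt {R : List ℝ} (hs : R.Pairwise (· < ·)) {k j : ℕ}
    (hk : k < R.length) (hj : j < R.length) (h : k < j) : R[k] < R[j] :=
  List.pairwise_iff_get.1 hs ⟨k, hk⟩ ⟨j, hj⟩ h

lemma sorted_set {R : List ℝ} {x : ℝ} {c0 : ℕ} (hc : c0 < R.length)
    (hs : R.Pairwise (· < ·))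
    (hlt : ∀ k (hk : k < R.length), k < c0 → R[k] < x) (hgt : x < R[c0]) :
    (R.set c0 x).Pairwise (· < ·) := by
  rw [List.pairwise_iff_get]
  intro i j hij
  have hi : (i : ℕ) < R.length := by simpa using i.2
  have hj : (j : ℕ) < R.length := by simpa using j.2
  simp only [List.get_eq_getElem, List.getElem_set]
  rcases eq_or_ne c0 (i : ℕ) with hci | hci
  · rw [if_pos hci]
    rcases eq_or_ne c0 (j : ℕ) with hcj | hcj
    · omega
    · rw [if_neg hcj]
      exact lt_trans hgt (sorted_get_lt hs hc hj (by omega))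
  · rw [if_neg hci]
    rcases eq_or_ne c0 (j : ℕ) with hcj | hcj
    · rw [if_pos hcj]
      exact hlt i hi (by omega)
    · rw [if_neg hcj]
      exact sorted_get_lt hs hi hj hij

lemma mem_set_cases {R : List ℝ} {x v : ℝ} {c0 : ℕ} (hc : c0 < R.length)
    (hnd : R.Nodup) (hv : v ∈ R.set c0 x) : v = x ∨ (v ∈ R ∧ v ≠ R[c0]) := by
  obtain ⟨k, hk, rfl⟩ := List.mem_iff_getElem.1 hv
  have hk' : k < R.length := by simpa using hk
  rw [List.getElem_set] at *
  rcases eq_or_ne c0 k with h | h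
  · left; rw [if_pos h]
  · right
    rw [if_neg h]
    refine ⟨List.getElem_mem hk', ?_⟩
    intro hEq
    exact h ((List.Nodup.getElem_inj_iff hnd).1 hEq.symm)

lemma nodup_set {R : List ℝ} {x : ℝ} {c0 : ℕ} (hc : c0 < R.length)
    (hnd : R.Nodup) (hx : x ∉ R) : (R.set c0 x).Nodup := by
  rw [List.nodup_iff_injective_get] at *
  intro i j hEq
  have hi : (i : ℕ) < R.length := by simpa using i.2
  have hj : (j : ℕ) < R.length := by simpa using j.2
  simp only [List.get_eq_getElem, List.getElem_set] at hEq
  rcases eq_or_ne c0 (i : ℕ) with hci | hci <;> rcases eq_or_ne c0 (j : ℕ) with hcj | hcj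
  · have : (i : ℕ) = (j : ℕ) := by omega
    exact Fin.ext this
  · rw [if_pos hci, if_neg hcj] at hEq
    exact absurd (hEq ▸ List.getElem_mem hj) hx
  · rw [if_neg hci, if_pos hcj] at hEq
    exact absurd (hEq.symm ▸ List.getElem_mem hi) hx
  · rw [if_neg hci, if_neg hcj] at hEq
    have : (⟨i, hi⟩ : Fin R.length) = ⟨j, hj⟩ := hnd (by simpa using hEq)
    exact Fin.ext (by simpa using congrArg (fun t : Fin R.length => (t : ℕ)) this)

def StdFrom (T : ℕ → List ℝ) (i : ℕ) : Prop :=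
  (∀ j, i ≤ j → (T j).Pairwise (· < ·)) ∧
  (∀ j, i ≤ j → (T (j+1)).length ≤ (T j).length) ∧
  (∀ j, i ≤ j → ∀ k (h1 : k < (T j).length) (h2 : k < (T (j+1)).length),
      (T j)[k] < (T (j+1))[k])

def DisjFrom (T : ℕ → List ℝ) (i : ℕ) : Prop :=
  (∀ j, i ≤ j → (T j).Nodup) ∧
  (∀ j j', i ≤ j → j < j' → ∀ v ∈ T j, v ∉ T j')

structure Spec (T : ℕ → List ℝ) (i : ℕ) (x : ℝ) (cmax : ℕ)
    (T' : ℕ → List ℝ) (r c : ℕ) : Prop where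
  low : ∀ j, j < i → T' j = T j
  std : StdFrom T' i
  disj : DisjFrom T' i
  mem : ∀ j, i ≤ j → ∀ v ∈ T' j, v = x ∨ ∃ j', i ≤ j' ∧ v ∈ T j'
  rge : i ≤ r
  ceq : c = (T r).length
  rlen : (T' r).length = (T r).length + 1
  olen : ∀ j, i ≤ j → j ≠ r → (T' j).length = (T j).length
  cle : c ≤ cmax
  nonemp : ∀ j, i ≤ j → j < r → T j ≠ []
  rowdesc : ∀ k (hk : k < (T' i).length),
    (∃ hk2 : k < (T i).length, (T' i)[k] = (T i)[k]) ∨ ((T' i)[k] = x ∧ k ≤ cmax)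

lemma spec_append (T : ℕ → List ℝ) (i : ℕ) (x : ℝ) (cmax : ℕ)
    (hstd : StdFrom T i) (hdisj : DisjFrom T i) (hx : ∀ j, i ≤ j → x ∉ T j)
    (hcm : ∀ h : cmax < (T i).length, x < (T i)[cmax])
    (hall : ∀ y ∈ T i, y < x) :
    Spec T i x cmax (Function.update T i (T i ++ [x])) i (T i).length := by
  obtain ⟨hsor, hlen, hcol⟩ := hstd
  obtain ⟨hnd, hcr⟩ := hdisj
  have hlec : (T i).length ≤ cmax := by
    by_contra hcon
    have h1 : cmax < (T i).length := by omega
    exact absurd (hall _ (List.getElem_mem h1)) (not_lt.2 (hcm h1).le)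
  have hup : ∀ j, j ≠ i → Function.update T i (T i ++ [x]) j = T j :=
    fun j hj => Function.update_of_ne hj _ _
  have hupi : Function.update T i (T i ++ [x]) i = T i ++ [x] :=
    Function.update_self _ _ _
  constructor
  · exact fun j hj => hup j (by omega)
  · refine ⟨?_, ?_, ?_⟩
    · intro j hj
      rcases eq_or_ne j i with rfl | hne
      · rw [hupi]
        exact sorted_concat' _ _ (hsor j le_rfl) hall
      · rw [hup j hne]; exact hsor j hj
    · intro j hj
      rcases eq_or_ne j i with rfl | hne
      · rw [hupi, hup (j+1) (by omega), List.length_append, List.length_singleton]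
        have := hlen j le_rfl
        omega
      · rw [hup j hne, hup (j+1) (by omega)]
        exact hlen j hj
    · intro j hj k h1 h2
      rcases eq_or_ne j i with rfl | hne
      · simp only [hup (j+1) (by omega : j + 1 ≠ j)] at h2 ⊢
        have hk : k < (T j).length := lt_of_lt_of_le h2 (hlen j le_rfl)
        simp only [hupi] at h1 ⊢
        rw [List.getElem_append_left hk]
        exact hcol j le_rfl k hk h2
      · simp only [hup j hne] at h1 ⊢
        simp only [hup (j+1) (by omega : j + 1 ≠ i)] at h2 ⊢
        exact hcol j hj k h1 h2
  · refine ⟨?_, ?_⟩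
    · intro j hj
      rcases eq_or_ne j i with rfl | hne
      · rw [hupi]
        simp only [List.nodup_append, List.nodup_singleton, List.disjoint_singleton]
        exact ⟨hnd j le_rfl, trivial, fun a ha b hb => by
            rw [List.mem_singleton] at hb; subst hb; exact fun h => hx j le_rfl (h ▸ ha)⟩
      · rw [hup j hne]; exact hnd j hj
    · intro j j' hj hjj v hv
      have hj' : j' ≠ i := by omega
      rw [hup j' hj']
      rcases eq_or_ne j i with rfl | hne
      · rw [hupi, List.mem_append, List.mem_singleton] at hv
        rcases hv with hv | rfl
        · exact hcr j j' hj hjj v hv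
        · exact hx j' (by omega)
      · rw [hup j hne] at hv
        exact hcr j j' hj hjj v hv
  · intro j hj v hv
    rcases eq_or_ne j i with rfl | hne
    · rw [hupi, List.mem_append, List.mem_singleton] at hv
      rcases hv with hv | rfl
      · exact Or.inr ⟨j, le_rfl, hv⟩
      · exact Or.inl rfl
    · rw [hup j hne] at hv
      exact Or.inr ⟨j, hj, hv⟩
  · exact le_rfl
  · rfl
  · rw [hupi, List.length_append, List.length_singleton]
  · intro j hj hne
    rw [hup j hne]
  · exact hlec
  · intro j hj1 hj2; omega
  · intro k hk
    simp only [hupi] at hk ⊢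
    rw [List.length_append, List.length_singleton] at hk
    rcases lt_or_ge k (T i).length with hk2 | hk2
    · exact Or.inl ⟨hk2, List.getElem_append_left hk2⟩
    · have hke : k = (T i).length := by omega
      subst hke
      exact Or.inr ⟨List.getElem_concat_length rfl _, hlec⟩

lemma insertTab_succ (fuel : ℕ) (T : ℕ → List ℝ) (i : ℕ) (x : ℝ) :
    insertTab (fuel+1) T i x =
      match rowInsert x (T i) with
      | (r, none) => (Function.update T i r, i, (T i).length)
      | (r, some y) => insertTab fuel (Function.update T i r) (i + 1) y := by
  rw [insertTab]

lemma insertTab_succ_none {T : ℕ → List ℝ} {i : ℕ} {x : ℝ} {R : List ℝ}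
    (fuel : ℕ) (h : rowInsert x (T i) = (R, none)) :
    insertTab (fuel+1) T i x = (Function.update T i R, i, (T i).length) := by
  rw [insertTab_succ, h]

lemma insertTab_succ_some {T : ℕ → List ℝ} {i : ℕ} {x y : ℝ} {R : List ℝ}
    (fuel : ℕ) (h : rowInsert x (T i) = (R, some y)) :
    insertTab (fuel+1) T i x = insertTab fuel (Function.update T i R) (i+1) y := by
  rw [insertTab_succ, h]

lemma not_bump_all_lt {T : ℕ → List ℝ} {i : ℕ} {x : ℝ}
    (hx : x ∉ T i) (hex : ¬ ∃ y ∈ T i, x < y) : ∀ y ∈ T i, y < x := by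
  intro y hy
  rcases lt_trichotomy y x with h | h | h
  · exact h
  · exact absurd (h ▸ hy) hx
  · exact absurd ⟨y, hy, h⟩ hex

lemma insert_spec : ∀ (fuel : ℕ) (T : ℕ → List ℝ) (i : ℕ) (x : ℝ) (cmax : ℕ),
    StdFrom T i → DisjFrom T i → (∀ j, i ≤ j → x ∉ T j) →
    (∀ h : cmax < (T i).length, x < (T i)[cmax]) →
    T (i + fuel) = [] →
    Spec T i x cmax (insertTab (fuel+1) T i x).1 (insertTab (fuel+1) T i x).2.1
      (insertTab (fuel+1) T i x).2.2 := by
  intro fuel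
  induction fuel with
  | zero =>
    intro T i x cmax hstd hdisj hx hcm hterm
    rw [Nat.add_zero] at hterm
    have hall : ∀ y ∈ T i, y < x := by rw [hterm]; simp
    have h := rowInsert_append x (T i) (fun y hy => not_lt.2 (hall y hy).le)
    rw [insertTab_succ_none 0 h]
    exact spec_append T i x cmax hstd hdisj hx hcm hall
  | succ fuel ih =>
    intro T i x cmax hstd hdisj hx hcm hterm
    by_cases hex : ∃ y ∈ T i, x < y
    · obtain ⟨c0, hc0, heq, hlt, hgt, hcnt⟩ :=
        rowInsert_bump x (T i) (hstd.1 i le_rfl) (hx i le_rfl) hex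
      rw [insertTab_succ_some (fuel+1) heq]
      set y := (T i)[c0] with hy
      set T₁ := Function.update T i ((T i).set c0 x) with hT₁def
      have hT₁i : T₁ i = (T i).set c0 x := Function.update_self _ _ _
      have hT₁j : ∀ j, j ≠ i → T₁ j = T j := fun j hj => Function.update_of_ne hj _ _
      have hymem : y ∈ T i := List.getElem_mem hc0
      have hccm : c0 ≤ cmax := by
        by_contra hcon
        have h1 : cmax < c0 := by omega
        have h2 : cmax < (T i).length := by omega
        exact absurd (hcm h2) (not_lt.2 (hlt cmax h2 h1).le)
      -- hypotheses for ih
      have std₁ : StdFrom T₁ (i+1) := by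
        refine ⟨?_, ?_, ?_⟩
        · intro j hj; rw [hT₁j j (by omega)]; exact hstd.1 j (by omega)
        · intro j hj; rw [hT₁j j (by omega), hT₁j (j+1) (by omega)]
          exact hstd.2.1 j (by omega)
        · intro j hj k h1 h2
          simp only [hT₁j j (by omega : j ≠ i), hT₁j (j+1) (by omega : j + 1 ≠ i)] at h1 h2 ⊢
          exact hstd.2.2 j (by omega) k h1 h2
      have disj₁ : DisjFrom T₁ (i+1) := by
        refine ⟨?_, ?_⟩
        · intro j hj; rw [hT₁j j (by omega)]; exact hdisj.1 j (by omega)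
        · intro j j' hj hjj v hv
          rw [hT₁j j (by omega)] at hv
          rw [hT₁j j' (by omega)]
          exact hdisj.2 j j' (by omega) hjj v hv
      have hy₁ : ∀ j, i+1 ≤ j → y ∉ T₁ j := by
        intro j hj
        rw [hT₁j j (by omega)]
        exact hdisj.2 i j le_rfl (by omega) y hymem
      have hcm₁ : ∀ h : c0 < (T₁ (i+1)).length, y < (T₁ (i+1))[c0] := by
        intro h
        simp only [hT₁j (i+1) (by omega : i + 1 ≠ i)] at h ⊢
        exact hstd.2.2 i le_rfl c0 hc0 h
      have hterm₁ : T₁ ((i+1) + fuel) = [] := by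
        rw [hT₁j _ (by omega)]
        rw [show (i+1) + fuel = i + (fuel+1) by omega]
        exact hterm
      have S := ih T₁ (i+1) y c0 std₁ disj₁ hy₁ hcm₁ hterm₁
      set P := insertTab (fuel+1) T₁ (i+1) y with hP
      have hT'i : P.1 i = (T i).set c0 x := by rw [S.low i (by omega), hT₁i]
      have hsset : ((T i).set c0 x).Pairwise (· < ·) :=
        sorted_set hc0 (hstd.1 i le_rfl) hlt hgt
      have hlset : ((T i).set c0 x).length = (T i).length := List.length_set
      constructor
      · -- low
        intro j hj
        rw [S.low j (by omega), hT₁j j (by omega)]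
      · -- std
        refine ⟨?_, ?_, ?_⟩
        · intro j hj
          rcases eq_or_ne j i with rfl | hne
          · rw [hT'i]; exact hsset
          · exact S.std.1 j (by omega)
        · intro j hj
          rcases eq_or_ne j i with rfl | hne
          · rw [hT'i, hlset]
            rcases eq_or_ne (j+1) P.2.1 with hr | hr
            · have h1 := S.rlen
              rw [← hr] at h1
              rw [h1, hT₁j (j+1) (by omega)]
              have h2 : P.2.2 = (T₁ (j+1)).length := by rw [S.ceq, hr]
              have h3 := S.cle
              rw [h2, hT₁j (j+1) (by omega)] at h3
              omega
            · rw [S.olen (j+1) le_rfl hr, hT₁j (j+1) (by omega)]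
              have := hstd.2.1 j le_rfl
              omega
          · exact S.std.2.1 j (by omega)
        · intro j hj k h1 h2
          rcases eq_or_ne j i with rfl | hne
          · have hkT : k < (T j).length := by
              rw [hT'i, hlset] at h1; exact h1
            have hLHS : (P.1 j)[k] = if c0 = k then x else (T j)[k] := by
              simp only [hT'i]
              exact List.getElem_set _
            rcases S.rowdesc k h2 with ⟨hk2, hval⟩ | ⟨hval, hkc0⟩
            · have hk2' : k < (T (j+1)).length := by
                rw [hT₁j (j+1) (by omega)] at hk2; exact hk2
              have hRHS : (P.1 (j+1))[k] = (T (j+1))[k] := by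
                rw [hval]
                simp only [hT₁j (j+1) (by omega : j + 1 ≠ j)]
              rw [hLHS, hRHS]
              rcases eq_or_ne c0 k with rfl | hck
              · rw [if_pos rfl]
                exact lt_trans hgt (hstd.2.2 j le_rfl c0 hc0 hk2')
              · rw [if_neg hck]
                exact hstd.2.2 j le_rfl k hkT hk2'
            · rw [hLHS, hval]
              rcases eq_or_ne c0 k with rfl | hck
              · rw [if_pos rfl]; exact hgt
              · rw [if_neg hck]
                exact sorted_get_lt (hstd.1 j le_rfl) hkT hc0 (by omega)
          · exact S.std.2.2 j (by omega) k h1 h2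
      · -- disj
        refine ⟨?_, ?_⟩
        · intro j hj
          rcases eq_or_ne j i with rfl | hne
          · rw [hT'i]
            exact nodup_set hc0 (hdisj.1 j le_rfl) (hx j le_rfl)
          · exact S.disj.1 j (by omega)
        · intro j j' hj hjj v hv
          rcases eq_or_ne j i with rfl | hne
          · rw [hT'i] at hv
            intro hv'
            rcases mem_set_cases hc0 (hdisj.1 j le_rfl) hv with rfl | ⟨hvT, hvy⟩
            · rcases S.mem j' (by omega) v hv' with rfl | ⟨j'', hj'', hvj⟩
              · exact absurd hgt (lt_irrefl _)
              · rw [hT₁j j'' (by omega)] at hvj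
                exact hx j'' (by omega) hvj
            · rcases S.mem j' (by omega) v hv' with rfl | ⟨j'', hj'', hvj⟩
              · exact hvy rfl
              · rw [hT₁j j'' (by omega)] at hvj
                exact hdisj.2 j j'' le_rfl (by omega) v hvT hvj
          · exact S.disj.2 j j' (by omega) hjj v hv
      · -- mem
        intro j hj v hv
        rcases eq_or_ne j i with rfl | hne
        · rw [hT'i] at hv
          rcases mem_set_cases hc0 (hdisj.1 j le_rfl) hv with rfl | ⟨hvT, _⟩
          · exact Or.inl rfl
          · exact Or.inr ⟨j, le_rfl, hvT⟩
        · rcases S.mem j (by omega) v hv with rfl | ⟨j'', hj'', hvj⟩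
          · exact Or.inr ⟨i, le_rfl, hymem⟩
          · rw [hT₁j j'' (by omega)] at hvj
            exact Or.inr ⟨j'', by omega, hvj⟩
      · -- rge
        have := S.rge; omega
      · -- ceq
        rw [S.ceq, hT₁j P.2.1 (by have := S.rge; omega)]
      · -- rlen
        rw [S.rlen, hT₁j P.2.1 (by have := S.rge; omega)]
      · -- olen
        intro j hj hne
        rcases eq_or_ne j i with rfl | hnei
        · rw [hT'i, hlset]
        · rw [S.olen j (by omega) hne, hT₁j j (by omega)]
      · -- cle
        have := S.cle; omega
      · -- nonemp
        intro j hj hjr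
        rcases eq_or_ne j i with rfl | hne
        · exact List.ne_nil_of_length_pos (by omega)
        · have := S.nonemp j (by omega) hjr
          rw [hT₁j j (by omega)] at this
          exact this
      · -- rowdesc
        intro k hk
        rw [hT'i, hlset] at hk
        have : (P.1 i)[k] = if c0 = k then x else (T i)[k] := by
          simp only [hT'i]
          exact List.getElem_set _
        rcases eq_or_ne c0 k with rfl | hck
        · rw [if_pos rfl] at this
          exact Or.inr ⟨this, by omega⟩
        · rw [if_neg hck] at this
          exact Or.inl ⟨hk, this⟩
    · have hall := not_bump_all_lt (hx i le_rfl) hex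
      have h := rowInsert_append x (T i) (fun y hy => not_lt.2 (hall y hy).le)
      rw [insertTab_succ_none (fuel+1) h]
      exact spec_append T i x cmax hstd hdisj hx hcm hall

lemma insertTab_low : ∀ (fuel : ℕ) (T : ℕ → List ℝ) (i : ℕ) (x : ℝ) (j : ℕ), j < i →
    (insertTab fuel T i x).1 j = T j := by
  intro fuel
  induction fuel with
  | zero => intro T i x j hj; rfl
  | succ fuel ih =>
    intro T i x j hj
    rcases hri : rowInsert x (T i) with ⟨R, o⟩
    cases o with
    | none =>
      rw [insertTab_succ_none fuel hri]
      exact Function.update_of_ne (by omega) _ _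
    | some y =>
      rw [insertTab_succ_some fuel hri, ih _ _ _ j (by omega)]
      exact Function.update_of_ne (by omega) _ _

lemma insertTab_congr : ∀ (fuel : ℕ) (T T' : ℕ → List ℝ) (i : ℕ) (x : ℝ),
    (∀ j, i ≤ j → T j = T' j) →
    (insertTab fuel T i x).2 = (insertTab fuel T' i x).2 ∧
    (∀ j, i ≤ j → (insertTab fuel T i x).1 j = (insertTab fuel T' i x).1 j) := by
  intro fuel
  induction fuel with
  | zero => intro T T' i x h; exact ⟨rfl, h⟩
  | succ fuel ih =>
    intro T T' i x h
    have hrow : T i = T' i := h i le_rfl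
    rcases hri : rowInsert x (T i) with ⟨R, o⟩
    have hri' : rowInsert x (T' i) = (R, o) := by rw [← hrow]; exact hri
    cases o with
    | none =>
      rw [insertTab_succ_none fuel hri, insertTab_succ_none fuel hri']
      refine ⟨by rw [hrow], ?_⟩
      intro j hj
      rcases eq_or_ne j i with rfl | hne
      · show Function.update T j R j = Function.update T' j R j
        rw [Function.update_self, Function.update_self]
      · show Function.update T i R j = Function.update T' i R j
        rw [Function.update_of_ne hne, Function.update_of_ne hne]
        exact h j hj
    | some y =>
      rw [insertTab_succ_some fuel hri, insertTab_succ_some fuel hri']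
      have hupd : ∀ j, i+1 ≤ j → Function.update T i R j = Function.update T' i R j := by
        intro j hj
        rw [Function.update_of_ne (by omega), Function.update_of_ne (by omega)]
        exact h j (by omega)
      have := ih (Function.update T i R) (Function.update T' i R) (i+1) y hupd
      refine ⟨this.1, ?_⟩
      intro j hj
      rcases lt_or_ge j (i+1) with hji | hji
      · have hje : j = i := by omega
        subst hje
        rw [insertTab_low, insertTab_low, Function.update_self, Function.update_self] <;> omega
      · exact this.2 j hji

lemma StdFrom_mono {T : ℕ → List ℝ} {i i' : ℕ} (h : i ≤ i') (hs : StdFrom T i) :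
    StdFrom T i' :=
  ⟨fun j hj => hs.1 j (by omega), fun j hj => hs.2.1 j (by omega),
   fun j hj => hs.2.2 j (by omega)⟩

lemma DisjFrom_mono {T : ℕ → List ℝ} {i i' : ℕ} (h : i ≤ i') (hs : DisjFrom T i) :
    DisjFrom T i' :=
  ⟨fun j hj => hs.1 j (by omega), fun j j' hj => hs.2 j j' (by omega)⟩

lemma bump_unique {l : List ℝ} {x : ℝ} {d e : ℕ} (hd : d < l.length) (he : e < l.length)
    (hd1 : ∀ k (hk : k < l.length), k < d → l[k] < x) (hd2 : x < l[d])
    (he1 : ∀ k (hk : k < l.length), k < e → l[k] < x) (he2 : x < l[e]) : d = e := by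
  rcases lt_trichotomy d e with h | h | h
  · exact absurd hd2 (not_lt.2 (he1 d hd h).le)
  · exact h
  · exact absurd he2 (not_lt.2 (hd1 e he h).le)

/-- Setup facts for the recursive call after a bump at row `i`, column `c0`. -/
lemma bump_setup {T : ℕ → List ℝ} {i : ℕ} {x : ℝ} {c0 : ℕ}
    (hstd : StdFrom T i) (hdisj : DisjFrom T i) (hx : ∀ j, i ≤ j → x ∉ T j)
    (hc0 : c0 < (T i).length)
    (hlt : ∀ k (hk : k < (T i).length), k < c0 → (T i)[k] < x)
    (hgt : x < (T i)[c0]) :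
    StdFrom (Function.update T i ((T i).set c0 x)) (i+1) ∧
    DisjFrom (Function.update T i ((T i).set c0 x)) (i+1) ∧
    (∀ j, i+1 ≤ j → (T i)[c0] ∉ Function.update T i ((T i).set c0 x) j) ∧
    (∀ h : c0 < ((Function.update T i ((T i).set c0 x)) (i+1)).length,
      (T i)[c0] < ((Function.update T i ((T i).set c0 x)) (i+1))[c0]) := by
  have hT₁j : ∀ j, j ≠ i → Function.update T i ((T i).set c0 x) j = T j :=
    fun j hj => Function.update_of_ne hj _ _
  refine ⟨⟨?_, ?_, ?_⟩, ⟨?_, ?_⟩, ?_, ?_⟩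
  · intro j hj; rw [hT₁j j (by omega)]; exact hstd.1 j (by omega)
  · intro j hj; rw [hT₁j j (by omega), hT₁j (j+1) (by omega)]
    exact hstd.2.1 j (by omega)
  · intro j hj k h1 h2
    simp only [hT₁j j (by omega : j ≠ i), hT₁j (j+1) (by omega : j + 1 ≠ i)] at h1 h2 ⊢
    exact hstd.2.2 j (by omega) k h1 h2
  · intro j hj; rw [hT₁j j (by omega)]; exact hdisj.1 j (by omega)
  · intro j j' hj hjj v hv
    rw [hT₁j j (by omega)] at hv
    rw [hT₁j j' (by omega)]
    exact hdisj.2 j j' (by omega) hjj v hv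
  · intro j hj
    rw [hT₁j j (by omega)]
    exact hdisj.2 i j le_rfl (by omega) _ (List.getElem_mem hc0)
  · intro h
    simp only [hT₁j (i+1) (by omega : i + 1 ≠ i)] at h ⊢
    exact hstd.2.2 i le_rfl c0 hc0 h

lemma mem_set_sub {R : List ℝ} {x v : ℝ} {c0 : ℕ} (hc : c0 < R.length)
    (hv : v ∈ R.set c0 x) : v = x ∨ v ∈ R := by
  obtain ⟨k, hk, rfl⟩ := List.mem_iff_getElem.1 hv
  have hk' : k < R.length := by simpa using hk
  rw [List.getElem_set]
  rcases eq_or_ne c0 k with h | h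
  · left; rw [if_pos h]
  · right; rw [if_neg h]; exact List.getElem_mem hk'

lemma lemA_append (fuel : ℕ) (T : ℕ → List ℝ) (i : ℕ) (u u' : ℝ)
    (hall : ∀ y ∈ T i, y < u) (huu : u < u') :
    (insertTab (fuel+1) (insertTab (fuel+1) T i u).1 i u').2.1
      ≤ (insertTab (fuel+1) T i u).2.1 ∧
    (insertTab (fuel+1) T i u).2.2
      < (insertTab (fuel+1) (insertTab (fuel+1) T i u).1 i u').2.2 := by
  have e1 := insertTab_succ_none fuel
    (rowInsert_append u (T i) fun y hy => not_lt.2 (hall y hy).le)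
  set T1 := Function.update T i (T i ++ [u]) with hT1def
  have hT1i : T1 i = T i ++ [u] := Function.update_self _ _ _
  have hall' : ∀ z ∈ T1 i, z < u' := by
    rw [hT1i]
    intro z hz
    rcases List.mem_append.1 hz with h | h
    · exact lt_trans (hall z h) huu
    · rw [List.mem_singleton] at h; subst h; exact huu
  have e2 := insertTab_succ_none fuel
    (rowInsert_append u' (T1 i) fun z hz => not_lt.2 (hall' z hz).le)
  simp only [e1, e2, hT1i]
  simp

lemma lemA : ∀ (fuel : ℕ) (T : ℕ → List ℝ) (i : ℕ) (u u' : ℝ),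
    StdFrom T i → DisjFrom T i → (∀ j, i ≤ j → u ∉ T j) → (∀ j, i ≤ j → u' ∉ T j) →
    u < u' → T (i + fuel) = [] →
    (insertTab (fuel+1) (insertTab (fuel+1) T i u).1 i u').2.1
      ≤ (insertTab (fuel+1) T i u).2.1 ∧
    (insertTab (fuel+1) T i u).2.2
      < (insertTab (fuel+1) (insertTab (fuel+1) T i u).1 i u').2.2 := by
  intro fuel
  induction fuel with
  | zero =>
    intro T i u u' hstd hdisj hu hu' huu hterm
    rw [Nat.add_zero] at hterm
    exact lemA_append 0 T i u u' (by rw [hterm]; simp) huu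
  | succ fuel ih =>
    intro T i u u' hstd hdisj hu hu' huu hterm
    by_cases hex : ∃ y ∈ T i, u < y
    · obtain ⟨c0, hc0, heq, hlt, hgt, -⟩ :=
        rowInsert_bump u (T i) (hstd.1 i le_rfl) (hu i le_rfl) hex
      have e1 : insertTab (fuel+1+1) T i u
          = insertTab (fuel+1) (Function.update T i ((T i).set c0 u)) (i+1) (T i)[c0] :=
        insertTab_succ_some (fuel+1) heq
      set y := (T i)[c0] with hydef
      set T₁ := Function.update T i ((T i).set c0 u) with hT₁def
      obtain ⟨std₁, disj₁, hy₁, hcm₁⟩ := bump_setup hstd hdisj hu hc0 hlt hgt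
      have hterm₁ : T₁ ((i+1) + fuel) = [] := by
        rw [hT₁def, Function.update_of_ne (by omega), show (i+1)+fuel = i + (fuel+1) by omega]
        exact hterm
      have S := insert_spec fuel T₁ (i+1) y c0 std₁ disj₁ hy₁ hcm₁ hterm₁
      set P := insertTab (fuel+1) T₁ (i+1) y with hPdef
      have hPi : P.1 i = (T i).set c0 u := by
        rw [S.low i (by omega), hT₁def]
        exact Function.update_self _ _ _
      have hlenPi : (P.1 i).length = (T i).length := by rw [hPi, List.length_set]
      have hu'P : u' ∉ P.1 i := by
        intro hmem
        rw [hPi] at hmem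
        rcases mem_set_sub hc0 hmem with h | hm
        · exact absurd h (ne_of_gt huu)
        · exact hu' i le_rfl hm
      have hsortPi : (P.1 i).Pairwise (· < ·) := by
        rw [hPi]
        exact sorted_set hc0 (hstd.1 i le_rfl) hlt hgt
      rw [e1]
      by_cases hex' : ∃ z ∈ P.1 i, u' < z
      · obtain ⟨c0', hc0', heq', hlt', hgt', -⟩ :=
          rowInsert_bump u' (P.1 i) hsortPi hu'P hex'
        have hc0'T : c0' < (T i).length := by rwa [hlenPi] at hc0'
        have hcc : c0 < c0' := by
          rcases lt_trichotomy c0' c0 with h | h | h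
          · have h1 : (P.1 i)[c0'] = (T i)[c0'] := by
              simp only [hPi]
              rw [List.getElem_set, if_neg (by omega)]
            rw [h1] at hgt'
            exact absurd (lt_trans (lt_trans hgt' (hlt c0' hc0'T h)) huu) (lt_irrefl _)
          · have h1 : (P.1 i)[c0'] = u := by
              simp only [hPi]
              rw [List.getElem_set, if_pos h.symm]
            rw [h1] at hgt'
            exact absurd (lt_trans hgt' huu) (lt_irrefl _)
          · exact h
        have hy' : (P.1 i)[c0'] = (T i)[c0'] := by
          simp only [hPi]
          rw [List.getElem_set, if_neg (by omega)]
        have hyy' : y < (P.1 i)[c0'] := by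
          rw [hy']
          exact sorted_get_lt (hstd.1 i le_rfl) hc0 hc0'T hcc
        have hy'T : ∀ j, i+1 ≤ j → (P.1 i)[c0'] ∉ T₁ j := by
          intro j hj
          rw [hT₁def, Function.update_of_ne (by omega), hy']
          exact hdisj.2 i j le_rfl (by omega) _ (List.getElem_mem hc0'T)
        have e2 : insertTab (fuel+1+1) P.1 i u'
            = insertTab (fuel+1) (Function.update P.1 i ((P.1 i).set c0' u')) (i+1)
                (P.1 i)[c0'] :=
          insertTab_succ_some (fuel+1) heq'
        have hcong := (insertTab_congr (fuel+1) (Function.update P.1 i ((P.1 i).set c0' u'))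
          P.1 (i+1) (P.1 i)[c0'] (fun j hj => Function.update_of_ne (by omega) _ _)).1
        have IH := ih T₁ (i+1) y (P.1 i)[c0'] std₁ disj₁ hy₁ hy'T hyy' hterm₁
        rw [e2]
        have h21 : (insertTab (fuel+1) (Function.update P.1 i ((P.1 i).set c0' u')) (i+1)
            (P.1 i)[c0']).2.1 = (insertTab (fuel+1) P.1 (i+1) (P.1 i)[c0']).2.1 := by
          rw [hcong]
        have h22 : (insertTab (fuel+1) (Function.update P.1 i ((P.1 i).set c0' u')) (i+1)
            (P.1 i)[c0']).2.2 = (insertTab (fuel+1) P.1 (i+1) (P.1 i)[c0']).2.2 := by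
          rw [hcong]
        rw [h21, h22]
        exact IH
      · have hall' := not_bump_all_lt hu'P hex'
        have e2 := insertTab_succ_none (fuel+1)
          (rowInsert_append u' (P.1 i) fun z hz => not_lt.2 (hall' z hz).le)
        rw [e2]
        constructor
        · show i ≤ P.2.1
          have := S.rge; omega
        · show P.2.2 < (P.1 i).length
          have h1 := S.cle
          rw [hlenPi]
          omega
    · exact lemA_append (fuel+1) T i u u'
        (not_bump_all_lt (hu i le_rfl) hex) huu

lemma insertTab_zero (T : ℕ → List ℝ) (i : ℕ) (x : ℝ) :
    insertTab 0 T i x = (T, i, 0) := by rw [insertTab]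

lemma lemB : ∀ (fuel : ℕ) (T : ℕ → List ℝ) (i : ℕ) (u u' : ℝ),
    StdFrom T i → DisjFrom T i → (∀ j, i ≤ j → u ∉ T j) → (∀ j, i ≤ j → u' ∉ T j) →
    u' < u → T (i + fuel) = [] →
    (insertTab (fuel+1) (insertTab (fuel+1) T i u).1 i u').2.2
      ≤ (insertTab (fuel+1) T i u).2.2 ∧
    (insertTab (fuel+1) T i u).2.1
      < (insertTab (fuel+1) (insertTab (fuel+1) T i u).1 i u').2.1 := by
  intro fuel
  induction fuel with
  | zero =>
    intro T i u u' hstd hdisj hu hu' huu hterm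
    rw [Nat.add_zero] at hterm
    have e1 : insertTab 1 T i u = (Function.update T i (T i ++ [u]), i, (T i).length) :=
      insertTab_succ_none 0 (rowInsert_append u (T i) (by rw [hterm]; simp))
    set T1 := Function.update T i (T i ++ [u]) with hT1def
    have hT1i : T1 i = [u] := by
      rw [hT1def, Function.update_self, hterm]
      simp
    have heq' : rowInsert u' (T1 i) = ([u'], some u) := by
      rw [hT1i]
      simp [rowInsert, huu]
    have e2 : insertTab 1 T1 i u' = insertTab 0 (Function.update T1 i [u']) (i+1) u := by
      have h := insertTab_succ_some 0 (R := [u']) (y := u) heq'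
      convert h using 3
    rw [e1]
    show (insertTab 1 T1 i u').2.2 ≤ (T i).length ∧ i < (insertTab 1 T1 i u').2.1
    rw [e2, insertTab_zero]
    exact ⟨Nat.zero_le _, Nat.lt_succ_self i⟩
  | succ fuel ih =>
    intro T i u u' hstd hdisj hu hu' huu hterm
    by_cases hex : ∃ y ∈ T i, u < y
    · obtain ⟨c0, hc0, heq, hlt, hgt, -⟩ :=
        rowInsert_bump u (T i) (hstd.1 i le_rfl) (hu i le_rfl) hex
      have e1 : insertTab (fuel+1+1) T i u
          = insertTab (fuel+1) (Function.update T i ((T i).set c0 u)) (i+1) (T i)[c0] :=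
        insertTab_succ_some (fuel+1) heq
      set y := (T i)[c0] with hydef
      set T₁ := Function.update T i ((T i).set c0 u) with hT₁def
      obtain ⟨std₁, disj₁, hy₁, hcm₁⟩ := bump_setup hstd hdisj hu hc0 hlt hgt
      have hterm₁ : T₁ ((i+1) + fuel) = [] := by
        rw [hT₁def, Function.update_of_ne (by omega), show (i+1)+fuel = i + (fuel+1) by omega]
        exact hterm
      have S := insert_spec fuel T₁ (i+1) y c0 std₁ disj₁ hy₁ hcm₁ hterm₁
      set P := insertTab (fuel+1) T₁ (i+1) y with hPdef
      have hPi : P.1 i = (T i).set c0 u := by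
        rw [S.low i (by omega), hT₁def]
        exact Function.update_self _ _ _
      have hlenPi : (P.1 i).length = (T i).length := by rw [hPi, List.length_set]
      have hu'P : u' ∉ P.1 i := by
        intro hmem
        rw [hPi] at hmem
        rcases mem_set_sub hc0 hmem with h | hm
        · exact absurd h (ne_of_lt huu)
        · exact hu' i le_rfl hm
      have hsortPi : (P.1 i).Pairwise (· < ·) := by
        rw [hPi]
        exact sorted_set hc0 (hstd.1 i le_rfl) hlt hgt
      have hPic0 : (P.1 i)[c0]'(by omega) = u := by
        simp only [hPi]
        rw [List.getElem_set, if_pos rfl]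
      have hex' : ∃ z ∈ P.1 i, u' < z :=
        ⟨u, by rw [← hPic0]; exact List.getElem_mem _, huu⟩
      obtain ⟨c0', hc0', heq', hlt', hgt', -⟩ :=
        rowInsert_bump u' (P.1 i) hsortPi hu'P hex'
      have hc0'T : c0' < (T i).length := by rwa [hlenPi] at hc0'
      have hcc : c0' ≤ c0 := by
        by_contra hcon
        have h1 := hlt' c0 (by omega) (by omega)
        rw [hPic0] at h1
        exact absurd (lt_trans h1 huu) (lt_irrefl _)
      have hy'y : (P.1 i)[c0'] < y := by
        rcases eq_or_ne c0' c0 with rfl | hne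
        · rw [hPic0]; exact hgt
        · have h1 : (P.1 i)[c0'] = (T i)[c0'] := by
            simp only [hPi]
            rw [List.getElem_set, if_neg (by omega)]
          rw [h1, hydef]
          exact sorted_get_lt (hstd.1 i le_rfl) hc0'T hc0 (by omega)
      have hy'T : ∀ j, i+1 ≤ j → (P.1 i)[c0'] ∉ T₁ j := by
        intro j hj
        rw [hT₁def, Function.update_of_ne (by omega)]
        rcases eq_or_ne c0' c0 with rfl | hne
        · simp only [hPic0]
          exact hu j (by omega)
        · have h1 : (P.1 i)[c0'] = (T i)[c0'] := by
            simp only [hPi]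
            rw [List.getElem_set, if_neg (by omega)]
          simp only [h1]
          exact hdisj.2 i j le_rfl (by omega) _ (List.getElem_mem hc0'T)
      have e2 : insertTab (fuel+1+1) P.1 i u'
          = insertTab (fuel+1) (Function.update P.1 i ((P.1 i).set c0' u')) (i+1)
              (P.1 i)[c0'] :=
        insertTab_succ_some (fuel+1) heq'
      have hcong := (insertTab_congr (fuel+1) (Function.update P.1 i ((P.1 i).set c0' u'))
        P.1 (i+1) (P.1 i)[c0'] (fun j hj => Function.update_of_ne (by omega) _ _)).1
      have IH := ih T₁ (i+1) y (P.1 i)[c0'] std₁ disj₁ hy₁ hy'T hy'y hterm₁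
      rw [e1, e2]
      have h21 : (insertTab (fuel+1) (Function.update P.1 i ((P.1 i).set c0' u')) (i+1)
          (P.1 i)[c0']).2.1 = (insertTab (fuel+1) P.1 (i+1) (P.1 i)[c0']).2.1 := by
        rw [hcong]
      have h22 : (insertTab (fuel+1) (Function.update P.1 i ((P.1 i).set c0' u')) (i+1)
          (P.1 i)[c0']).2.2 = (insertTab (fuel+1) P.1 (i+1) (P.1 i)[c0']).2.2 := by
        rw [hcong]
      rw [h21, h22]
      exact IH
    · -- first insertion appends at row i; the second must bump `u` and go deeper
      have hall := not_bump_all_lt (hu i le_rfl) hex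
      have e1 : insertTab (fuel+1+1) T i u
          = (Function.update T i (T i ++ [u]), i, (T i).length) :=
        insertTab_succ_none (fuel+1) (rowInsert_append u (T i) fun y hy => not_lt.2 (hall y hy).le)
      set Q := insertTab (fuel+1+1) T i u with hQdef
      have hQ1i : Q.1 i = T i ++ [u] := by
        rw [e1]
        exact Function.update_self _ _ _
      have hQ21 : Q.2.1 = i := by rw [e1]
      have hQ22 : Q.2.2 = (T i).length := by rw [e1]
      have hcmQ : (T i).length < (T i).length → False := fun h => absurd h (lt_irrefl _)
      have S1 := insert_spec (fuel+1) T i u (T i).length hstd hdisj hu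
        (fun h => absurd h (lt_irrefl _)) hterm
      have hu'Q : ∀ j, i ≤ j → u' ∉ Q.1 j := by
        intro j hj hmem
        rcases S1.mem j hj u' hmem with h | ⟨j'', hj'', hm⟩
        · exact absurd h (ne_of_lt huu)
        · exact hu' j'' hj'' hm
      have htermQ : Q.1 (i + (fuel+1)) = [] := by
        have h1 := S1.olen (i + (fuel+1)) (by omega) (by rw [hQ21]; omega)
        rw [hterm] at h1
        exact List.length_eq_zero_iff.1 (by rw [h1]; rfl)
      have hcm2 : ∀ h : (T i).length < (Q.1 i).length, u' < (Q.1 i)[(T i).length] := by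
        intro h
        have h1 : (Q.1 i)[(T i).length] = u := by
          simp only [hQ1i]
          exact List.getElem_concat_length rfl _
        rw [h1]
        exact huu
      have S2 := insert_spec (fuel+1) Q.1 i u' (T i).length S1.std S1.disj hu'Q hcm2 htermQ
      constructor
      · rw [hQ22]
        exact S2.cle
      · rw [hQ21]
        rcases eq_or_ne (insertTab (fuel+1+1) Q.1 i u').2.1 i with hri | hri
        · exfalso
          have h1 := S2.ceq
          rw [hri, hQ1i] at h1
          have h2 := S2.cle
          rw [h1] at h2
          simp at h2
        · have := S2.rge
          omega

lemma lemC : ∀ (fuel : ℕ) (T : ℕ → List ℝ) (i : ℕ) (u u' : ℝ),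
    StdFrom T i → DisjFrom T i → (∀ j, i ≤ j → u ∉ T j) → (∀ j, i ≤ j → u' ∉ T j) →
    u < u' → T (i + fuel) = [] →
    (insertTab (fuel+1) T i u).2.2 ≤ (insertTab (fuel+1) T i u').2.2 ∧
    (insertTab (fuel+1) T i u').2.1 ≤ (insertTab (fuel+1) T i u).2.1 := by
  intro fuel
  induction fuel with
  | zero =>
    intro T i u u' hstd hdisj hu hu' huu hterm
    rw [Nat.add_zero] at hterm
    have e1 := insertTab_succ_none 0 (rowInsert_append u (T i) (by rw [hterm]; simp))
    have e2 := insertTab_succ_none 0 (rowInsert_append u' (T i) (by rw [hterm]; simp))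
    rw [e1, e2]
    exact ⟨le_rfl, le_rfl⟩
  | succ fuel ih =>
    intro T i u u' hstd hdisj hu hu' huu hterm
    by_cases hex : ∃ y ∈ T i, u < y
    · obtain ⟨c0, hc0, heq, hlt, hgt, -⟩ :=
        rowInsert_bump u (T i) (hstd.1 i le_rfl) (hu i le_rfl) hex
      have e1 : insertTab (fuel+1+1) T i u
          = insertTab (fuel+1) (Function.update T i ((T i).set c0 u)) (i+1) (T i)[c0] :=
        insertTab_succ_some (fuel+1) heq
      set y := (T i)[c0] with hydef
      set T₁ := Function.update T i ((T i).set c0 u) with hT₁def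
      obtain ⟨std₁, disj₁, hy₁, hcm₁⟩ := bump_setup hstd hdisj hu hc0 hlt hgt
      have hterm₁ : T₁ ((i+1) + fuel) = [] := by
        rw [hT₁def, Function.update_of_ne (by omega), show (i+1)+fuel = i + (fuel+1) by omega]
        exact hterm
      have S := insert_spec fuel T₁ (i+1) y c0 std₁ disj₁ hy₁ hcm₁ hterm₁
      by_cases hex' : ∃ z ∈ T i, u' < z
      · obtain ⟨c0', hc0', heq', hlt', hgt', -⟩ :=
          rowInsert_bump u' (T i) (hstd.1 i le_rfl) (hu' i le_rfl) hex'
        have e2 : insertTab (fuel+1+1) T i u'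
            = insertTab (fuel+1) (Function.update T i ((T i).set c0' u')) (i+1) (T i)[c0'] :=
          insertTab_succ_some (fuel+1) heq'
        have hcc : c0 ≤ c0' := by
          by_contra hcon
          have h1 := hlt c0' hc0' (by omega)
          exact absurd (lt_trans hgt' (lt_trans h1 huu)) (lt_irrefl _)
        have hcong1 := (insertTab_congr (fuel+1) T₁ T (i+1) y
          (fun j hj => by rw [hT₁def]; exact Function.update_of_ne (by omega) _ _)).1
        have hcong2 := (insertTab_congr (fuel+1) (Function.update T i ((T i).set c0' u'))
          T (i+1) (T i)[c0'] (fun j hj => Function.update_of_ne (by omega) _ _)).1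
        rcases eq_or_ne c0 c0' with rfl | hne
        · rw [e1, e2]
          have h2 : (insertTab (fuel+1) T₁ (i+1) (T i)[c0]).2
              = (insertTab (fuel+1) (Function.update T i ((T i).set c0 u')) (i+1) (T i)[c0]).2 := by
            rw [hcong1, hcong2]
          constructor
          · rw [show (insertTab (fuel+1) T₁ (i+1) (T i)[c0]).2.2
                = (insertTab (fuel+1) (Function.update T i ((T i).set c0 u')) (i+1) (T i)[c0]).2.2
              by rw [h2]]
          · rw [show (insertTab (fuel+1) T₁ (i+1) (T i)[c0]).2.1
                = (insertTab (fuel+1) (Function.update T i ((T i).set c0 u')) (i+1) (T i)[c0]).2.1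
              by rw [h2]]
        · have hcc' : c0 < c0' := by omega
          have hyy' : y < (T i)[c0'] := sorted_get_lt (hstd.1 i le_rfl) hc0 hc0' hcc'
          have hyT : ∀ j, i+1 ≤ j → y ∉ T j :=
            fun j hj => hdisj.2 i j le_rfl (by omega) _ (List.getElem_mem hc0)
          have hy'T : ∀ j, i+1 ≤ j → (T i)[c0'] ∉ T j :=
            fun j hj => hdisj.2 i j le_rfl (by omega) _ (List.getElem_mem hc0')
          have htermT : T ((i+1) + fuel) = [] := by
            rw [show (i+1)+fuel = i + (fuel+1) by omega]; exact hterm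
          have IH := ih T (i+1) y (T i)[c0'] (StdFrom_mono (by omega) hstd)
            (DisjFrom_mono (by omega) hdisj) hyT hy'T hyy' htermT
          rw [e1, e2]
          constructor
          · rw [show (insertTab (fuel+1) T₁ (i+1) y).2.2
                = (insertTab (fuel+1) T (i+1) y).2.2 by rw [hcong1],
              show (insertTab (fuel+1) (Function.update T i ((T i).set c0' u')) (i+1) (T i)[c0']).2.2
                = (insertTab (fuel+1) T (i+1) (T i)[c0']).2.2 by rw [hcong2]]
            exact IH.1
          · rw [show (insertTab (fuel+1) T₁ (i+1) y).2.1
                = (insertTab (fuel+1) T (i+1) y).2.1 by rw [hcong1],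
              show (insertTab (fuel+1) (Function.update T i ((T i).set c0' u')) (i+1) (T i)[c0']).2.1
                = (insertTab (fuel+1) T (i+1) (T i)[c0']).2.1 by rw [hcong2]]
            exact IH.2
      · have hall' := not_bump_all_lt (hu' i le_rfl) hex'
        have e2 := insertTab_succ_none (fuel+1)
          (rowInsert_append u' (T i) fun z hz => not_lt.2 (hall' z hz).le)
        rw [e1, e2]
        constructor
        · show (insertTab (fuel+1) T₁ (i+1) y).2.2 ≤ (T i).length
          have := S.cle
          omega
        · show i ≤ (insertTab (fuel+1) T₁ (i+1) y).2.1
          have := S.rge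
          omega
    · have hall := not_bump_all_lt (hu i le_rfl) hex
      have hall' : ∀ z ∈ T i, z < u' := fun z hz => lt_trans (hall z hz) huu
      have e1 := insertTab_succ_none (fuel+1)
        (rowInsert_append u (T i) fun z hz => not_lt.2 (hall z hz).le)
      have e2 := insertTab_succ_none (fuel+1)
        (rowInsert_append u' (T i) fun z hz => not_lt.2 (hall' z hz).le)
      rw [e1, e2]
      exact ⟨le_rfl, le_rfl⟩

lemma lemD_append (fuel : ℕ) (T : ℕ → List ℝ) (i : ℕ) (u u' : ℝ)
    (hall : ∀ y ∈ T i, y < u) (huu : u < u') :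
    (insertTab (fuel+1) T i u').2.2
      ≤ (insertTab (fuel+1) (insertTab (fuel+1) T i u).1 i u').2.2 ∧
    (insertTab (fuel+1) (insertTab (fuel+1) T i u).1 i u').2.1
      ≤ (insertTab (fuel+1) T i u').2.1 := by
  have e1 := insertTab_succ_none fuel
    (rowInsert_append u (T i) fun y hy => not_lt.2 (hall y hy).le)
  have es := insertTab_succ_none fuel
    (rowInsert_append u' (T i) fun y hy => not_lt.2 (lt_trans (hall y hy) huu).le)
  set T1 := Function.update T i (T i ++ [u]) with hT1def
  have hT1i : T1 i = T i ++ [u] := Function.update_self _ _ _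
  have hall' : ∀ z ∈ T1 i, z < u' := by
    rw [hT1i]
    intro z hz
    rcases List.mem_append.1 hz with h | h
    · exact lt_trans (hall z h) huu
    · rw [List.mem_singleton] at h; subst h; exact huu
  have ed := insertTab_succ_none fuel
    (rowInsert_append u' (T1 i) fun z hz => not_lt.2 (hall' z hz).le)
  rw [e1]
  show (insertTab (fuel+1) T i u').2.2 ≤ (insertTab (fuel+1) T1 i u').2.2 ∧
    (insertTab (fuel+1) T1 i u').2.1 ≤ (insertTab (fuel+1) T i u').2.1
  rw [es, ed]
  constructor
  · show (T i).length ≤ (T1 i).length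
    rw [hT1i, List.length_append]
    simp
  · exact le_rfl

lemma lemD : ∀ (fuel : ℕ) (T : ℕ → List ℝ) (i : ℕ) (u u' : ℝ),
    StdFrom T i → DisjFrom T i → (∀ j, i ≤ j → u ∉ T j) → (∀ j, i ≤ j → u' ∉ T j) →
    u < u' → T (i + fuel) = [] →
    (insertTab (fuel+1) T i u').2.2
      ≤ (insertTab (fuel+1) (insertTab (fuel+1) T i u).1 i u').2.2 ∧
    (insertTab (fuel+1) (insertTab (fuel+1) T i u).1 i u').2.1
      ≤ (insertTab (fuel+1) T i u').2.1 := by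
  intro fuel
  induction fuel with
  | zero =>
    intro T i u u' hstd hdisj hu hu' huu hterm
    rw [Nat.add_zero] at hterm
    exact lemD_append 0 T i u u' (by rw [hterm]; simp) huu
  | succ fuel ih =>
    intro T i u u' hstd hdisj hu hu' huu hterm
    by_cases hex : ∃ y ∈ T i, u < y
    · obtain ⟨c0, hc0, heq, hlt, hgt, -⟩ :=
        rowInsert_bump u (T i) (hstd.1 i le_rfl) (hu i le_rfl) hex
      have e1 : insertTab (fuel+1+1) T i u
          = insertTab (fuel+1) (Function.update T i ((T i).set c0 u)) (i+1) (T i)[c0] :=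
        insertTab_succ_some (fuel+1) heq
      set y := (T i)[c0] with hydef
      set T₁ := Function.update T i ((T i).set c0 u) with hT₁def
      obtain ⟨std₁, disj₁, hy₁, hcm₁⟩ := bump_setup hstd hdisj hu hc0 hlt hgt
      have hterm₁ : T₁ ((i+1) + fuel) = [] := by
        rw [hT₁def, Function.update_of_ne (by omega), show (i+1)+fuel = i + (fuel+1) by omega]
        exact hterm
      have S := insert_spec fuel T₁ (i+1) y c0 std₁ disj₁ hy₁ hcm₁ hterm₁
      set P := insertTab (fuel+1) T₁ (i+1) y with hPdef
      have hPi : P.1 i = (T i).set c0 u := by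
        rw [S.low i (by omega), hT₁def]
        exact Function.update_self _ _ _
      have hlenPi : (P.1 i).length = (T i).length := by rw [hPi, List.length_set]
      have hu'P : u' ∉ P.1 i := by
        intro hmem
        rw [hPi] at hmem
        rcases mem_set_sub hc0 hmem with h | hm
        · exact absurd h (ne_of_gt huu)
        · exact hu' i le_rfl hm
      have hsortPi : (P.1 i).Pairwise (· < ·) := by
        rw [hPi]
        exact sorted_set hc0 (hstd.1 i le_rfl) hlt hgt
      have hPic0 : (P.1 i)[c0]'(by omega) = u := by
        simp only [hPi]
        rw [List.getElem_set, if_pos rfl]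
      rw [e1]
      by_cases hexs : ∃ z ∈ T i, u' < z
      · obtain ⟨c0'', hc0'', heq'', hlt'', hgt'', -⟩ :=
          rowInsert_bump u' (T i) (hstd.1 i le_rfl) (hu' i le_rfl) hexs
        have hcc : c0 ≤ c0'' := by
          by_contra hcon
          have h1 := hlt c0'' hc0'' (by omega)
          exact absurd (lt_trans hgt'' (lt_trans h1 huu)) (lt_irrefl _)
        have es : insertTab (fuel+1+1) T i u'
            = insertTab (fuel+1) (Function.update T i ((T i).set c0'' u')) (i+1) (T i)[c0''] :=
          insertTab_succ_some (fuel+1) heq''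
        rcases eq_or_ne c0 c0'' with rfl | hne0
        · -- single insertion bumps y at the same column c0; its tail equals P's tail
          have hcongS := (insertTab_congr (fuel+1) (Function.update T i ((T i).set c0 u'))
            T₁ (i+1) y (fun j hj => by
              rw [hT₁def, Function.update_of_ne (by omega), Function.update_of_ne (by omega)])).1
          by_cases hexd : ∃ z ∈ P.1 i, u' < z
          · obtain ⟨e0, he0, heq₃, hlt₃, hgt₃, -⟩ :=
              rowInsert_bump u' (P.1 i) hsortPi hu'P hexd
            have he0T : e0 < (T i).length := by rwa [hlenPi] at he0
            have hce : c0 < e0 := by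
              rcases lt_trichotomy e0 c0 with h | h | h
              · have h1 : (P.1 i)[e0] = (T i)[e0] := by
                  simp only [hPi]
                  rw [List.getElem_set, if_neg (by omega)]
                rw [h1] at hgt₃
                exact absurd (lt_trans hgt₃ (lt_trans (hlt e0 he0T h) huu)) (lt_irrefl _)
              · subst h
                rw [hPic0] at hgt₃
                exact absurd (lt_trans hgt₃ huu) (lt_irrefl _)
              · exact h
            have hw : (P.1 i)[e0] = (T i)[e0] := by
              simp only [hPi]
              rw [List.getElem_set, if_neg (by omega)]
            have hyw : y < (P.1 i)[e0] := by
              rw [hw, hydef]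
              exact sorted_get_lt (hstd.1 i le_rfl) hc0 he0T hce
            have hwT : ∀ j, i+1 ≤ j → (P.1 i)[e0] ∉ T₁ j := by
              intro j hj
              rw [hT₁def, Function.update_of_ne (by omega)]
              simp only [hw]
              exact hdisj.2 i j le_rfl (by omega) _ (List.getElem_mem he0T)
            have ed : insertTab (fuel+1+1) P.1 i u'
                = insertTab (fuel+1) (Function.update P.1 i ((P.1 i).set e0 u')) (i+1)
                    (P.1 i)[e0] :=
              insertTab_succ_some (fuel+1) heq₃
            have hcongD := (insertTab_congr (fuel+1)
              (Function.update P.1 i ((P.1 i).set e0 u')) P.1 (i+1) (P.1 i)[e0]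
              (fun j hj => Function.update_of_ne (by omega) _ _)).1
            have A := lemA fuel T₁ (i+1) y (P.1 i)[e0] std₁ disj₁ hy₁ hwT hyw hterm₁
            rw [es, ed]
            constructor
            · rw [show (insertTab (fuel+1) (Function.update T i ((T i).set c0 u')) (i+1) y).2.2
                  = P.2.2 by rw [hcongS],
                show (insertTab (fuel+1) (Function.update P.1 i ((P.1 i).set e0 u')) (i+1)
                    (P.1 i)[e0]).2.2
                  = (insertTab (fuel+1) P.1 (i+1) (P.1 i)[e0]).2.2 by rw [hcongD]]
              exact le_of_lt A.2
            · rw [show (insertTab (fuel+1) (Function.update T i ((T i).set c0 u')) (i+1) y).2.1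
                  = P.2.1 by rw [hcongS],
                show (insertTab (fuel+1) (Function.update P.1 i ((P.1 i).set e0 u')) (i+1)
                    (P.1 i)[e0]).2.1
                  = (insertTab (fuel+1) P.1 (i+1) (P.1 i)[e0]).2.1 by rw [hcongD]]
              exact A.1
          · -- pair insertion appends at row i
            have hall'' := not_bump_all_lt hu'P hexd
            have ed := insertTab_succ_none (fuel+1)
              (rowInsert_append u' (P.1 i) fun z hz => not_lt.2 (hall'' z hz).le)
            rw [es, ed]
            constructor
            · show (insertTab (fuel+1) (Function.update T i ((T i).set c0 u')) (i+1) y).2.2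
                ≤ (P.1 i).length
              rw [show (insertTab (fuel+1) (Function.update T i ((T i).set c0 u')) (i+1) y).2.2
                  = P.2.2 by rw [hcongS]]
              have h1 := S.cle
              rw [hlenPi]
              omega
            · show i ≤ (insertTab (fuel+1) (Function.update T i ((T i).set c0 u')) (i+1) y).2.1
              rw [show (insertTab (fuel+1) (Function.update T i ((T i).set c0 u')) (i+1) y).2.1
                  = P.2.1 by rw [hcongS]]
              have := S.rge
              omega
        · -- c0 < c0'' : the pair insertion bumps the same entry v at column c0''
          have hcc' : c0 < c0'' := by omega
          have hyu' : y < u' := hlt'' c0 hc0 hcc'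
          have hyv : y < (T i)[c0''] := lt_trans hyu' hgt''
          have hc0''P : c0'' < (P.1 i).length := by rwa [hlenPi]
          have hvP : (P.1 i)[c0''] = (T i)[c0''] := by
            simp only [hPi]
            rw [List.getElem_set, if_neg (by omega)]
          have hexd : ∃ z ∈ P.1 i, u' < z :=
            ⟨(P.1 i)[c0''], List.getElem_mem _, by rw [hvP]; exact hgt''⟩
          obtain ⟨e0, he0, heq₃, hlt₃, hgt₃, -⟩ :=
            rowInsert_bump u' (P.1 i) hsortPi hu'P hexd
          have he0eq : e0 = c0'' := by
            refine bump_unique he0 hc0''P hlt₃ hgt₃ ?_ (by rw [hvP]; exact hgt'')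
            intro k hk hkc
            have hkT : k < (T i).length := by rwa [hlenPi] at hk
            rcases eq_or_ne k c0 with rfl | hkne
            · rw [hPic0]
              exact huu
            · have h1 : (P.1 i)[k] = (T i)[k] := by
                simp only [hPi]
                rw [List.getElem_set, if_neg (by omega)]
              rw [h1]
              exact hlt'' k hkT hkc
          subst he0eq
          have ed : insertTab (fuel+1+1) P.1 i u'
              = insertTab (fuel+1) (Function.update P.1 i ((P.1 i).set e0 u')) (i+1)
                  (P.1 i)[e0] :=
            insertTab_succ_some (fuel+1) heq₃
          rw [hvP] at ed
          have hcongS := (insertTab_congr (fuel+1) (Function.update T i ((T i).set e0 u'))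
            T₁ (i+1) (T i)[e0] (fun j hj => by
              rw [hT₁def, Function.update_of_ne (by omega), Function.update_of_ne (by omega)])).1
          have hcongD := (insertTab_congr (fuel+1)
            (Function.update P.1 i ((P.1 i).set e0 u')) P.1 (i+1) (T i)[e0]
            (fun j hj => Function.update_of_ne (by omega) _ _)).1
          have hvT : ∀ j, i+1 ≤ j → (T i)[e0] ∉ T₁ j := by
            intro j hj
            rw [hT₁def, Function.update_of_ne (by omega)]
            exact hdisj.2 i j le_rfl (by omega) _ (List.getElem_mem _)
          have IH := ih T₁ (i+1) y (T i)[e0] std₁ disj₁ hy₁ hvT hyv hterm₁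
          rw [es, ed]
          constructor
          · rw [show (insertTab (fuel+1) (Function.update T i ((T i).set e0 u')) (i+1)
                  (T i)[e0]).2.2
                = (insertTab (fuel+1) T₁ (i+1) (T i)[e0]).2.2 by rw [hcongS],
              show (insertTab (fuel+1) (Function.update P.1 i ((P.1 i).set e0 u')) (i+1)
                  (T i)[e0]).2.2
                = (insertTab (fuel+1) P.1 (i+1) (T i)[e0]).2.2 by rw [hcongD]]
            exact IH.1
          · rw [show (insertTab (fuel+1) (Function.update T i ((T i).set e0 u')) (i+1)
                  (T i)[e0]).2.1
                = (insertTab (fuel+1) T₁ (i+1) (T i)[e0]).2.1 by rw [hcongS],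
              show (insertTab (fuel+1) (Function.update P.1 i ((P.1 i).set e0 u')) (i+1)
                  (T i)[e0]).2.1
                = (insertTab (fuel+1) P.1 (i+1) (T i)[e0]).2.1 by rw [hcongD]]
            exact IH.2
      · -- single insertion appends; pair appends too
        have hall' := not_bump_all_lt (hu' i le_rfl) hexs
        have es := insertTab_succ_none (fuel+1)
          (rowInsert_append u' (T i) fun z hz => not_lt.2 (hall' z hz).le)
        have halld : ∀ z ∈ P.1 i, z < u' := by
          intro z hz
          rw [hPi] at hz
          rcases mem_set_sub hc0 hz with rfl | hm
          · exact huu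
          · exact hall' z hm
        have ed := insertTab_succ_none (fuel+1)
          (rowInsert_append u' (P.1 i) fun z hz => not_lt.2 (halld z hz).le)
        rw [es, ed]
        constructor
        · show (T i).length ≤ (P.1 i).length
          rw [hlenPi]
        · exact le_rfl
    · exact lemD_append (fuel+1) T i u u'
        (not_bump_all_lt (hu i le_rfl) hex) huu

lemma insertTab_fuel : ∀ (f : ℕ) (T : ℕ → List ℝ) (i : ℕ) (x : ℝ) (k : ℕ),
    T (i + f) = [] → insertTab (f+1+k) T i x = insertTab (f+1) T i x := by
  intro f
  induction f with
  | zero =>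
    intro T i x k hterm
    rw [Nat.add_zero] at hterm
    have h := rowInsert_append x (T i) (by rw [hterm]; simp)
    rw [show 0+1+k = k+1 by omega, insertTab_succ_none k h, insertTab_succ_none 0 h]
  | succ f ih =>
    intro T i x k hterm
    rcases hri : rowInsert x (T i) with ⟨R, o⟩
    cases o with
    | none =>
      rw [show f+1+1+k = (f+k+1)+1 by omega]
      rw [insertTab_succ_none (f+k+1) hri, insertTab_succ_none (f+1) hri]
    | some y =>
      rw [show f+1+1+k = (f+1+k)+1 by omega]
      rw [insertTab_succ_some (f+1+k) hri, insertTab_succ_some (f+1) hri]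
      rw [show f+1+k = f+1+k from rfl]
      have hterm' : Function.update T i R ((i+1) + f) = [] := by
        rw [Function.update_of_ne (by omega), show (i+1)+f = i + (f+1) by omega]
        exact hterm
      exact ih (Function.update T i R) (i+1) y k hterm'

lemma insertTab_fuel_eq {T : ℕ → List ℝ} {i : ℕ} {x : ℝ} {f F F' : ℕ}
    (hterm : T (i + f) = []) (hF : f + 1 ≤ F) (hF' : f + 1 ≤ F') :
    insertTab F T i x = insertTab F' T i x := by
  obtain ⟨k, rfl⟩ : ∃ k, F = f + 1 + k := ⟨F - (f+1), by omega⟩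
  obtain ⟨k', rfl⟩ : ∃ k', F' = f + 1 + k' := ⟨F' - (f+1), by omega⟩
  rw [insertTab_fuel f T i x k hterm, insertTab_fuel f T i x k' hterm]

noncomputable def tabF (F : ℕ) (l : List ℝ) : ℕ → List ℝ :=
  l.foldl (fun Tc x => (insertTab F Tc 0 x).1) (fun _ => [])

lemma fold_master : ∀ (l : List ℝ) (T : ℕ → List ℝ) (n : ℕ),
    StdFrom T 0 → DisjFrom T 0 → (∀ j, n ≤ j → T j = []) →
    (∀ j v, v ∈ T j → v ∉ l) → l.Nodup →
    ∀ F, n + l.length < F →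
    StdFrom (l.foldl (fun Tc x => (insertTab F Tc 0 x).1) T) 0 ∧
    DisjFrom (l.foldl (fun Tc x => (insertTab F Tc 0 x).1) T) 0 ∧
    (∀ j, n + l.length ≤ j → (l.foldl (fun Tc x => (insertTab F Tc 0 x).1) T) j = []) ∧
    (∀ j v, v ∈ (l.foldl (fun Tc x => (insertTab F Tc 0 x).1) T) j →
      (∃ j', v ∈ T j') ∨ v ∈ l) ∧
    (∀ F', n + l.length < F' →
      l.foldl (fun Tc x => (insertTab F Tc 0 x).1) T
        = l.foldl (fun Tc x => (insertTab F' Tc 0 x).1) T) := by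
  intro l
  induction l with
  | nil =>
    intro T n hstd hdisj hemp hmem hnd F hF
    exact ⟨hstd, hdisj, fun j hj => hemp j (by simpa using hj),
      fun j v hv => Or.inl ⟨j, hv⟩, fun F' hF' => rfl⟩
  | cons x xs ih =>
    intro T n hstd hdisj hemp hmem hnd F hF
    obtain ⟨f, rfl⟩ : ∃ f, F = f + 1 := ⟨F - 1, by omega⟩
    have hnf : n ≤ f := by simp at hF; omega
    have hterm : T (0 + f) = [] := by rw [Nat.zero_add]; exact hemp f (by omega)
    have hx : ∀ j, 0 ≤ j → x ∉ T j := by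
      intro j _ hmemx
      exact hmem j x hmemx (List.mem_cons_self)
    have S := insert_spec f T 0 x (T 0).length hstd hdisj hx
      (fun h => absurd h (lt_irrefl _)) hterm
    set Q := insertTab (f+1) T 0 x with hQdef
    have hrle : Q.2.1 ≤ n := by
      by_contra hcon
      exact S.nonemp n (by omega) (by omega) (hemp n le_rfl)
    have hempQ : ∀ j, n + 1 ≤ j → Q.1 j = [] := by
      intro j hj
      have h1 := S.olen j (by omega) (by omega)
      rw [hemp j (by omega)] at h1
      exact List.length_eq_zero_iff.1 (by rw [h1]; rfl)
    have hmemQ : ∀ j v, v ∈ Q.1 j → v ∉ xs := by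
      intro j v hv
      rcases S.mem j (by omega) v hv with rfl | ⟨j', _, hm⟩
      · exact (List.nodup_cons.1 hnd).1
      · exact fun hc => hmem j' v hm (List.mem_cons_of_mem _ hc)
    have IH := ih Q.1 (n+1) S.std S.disj hempQ hmemQ (List.nodup_cons.1 hnd).2
      (f+1) (by simp at hF ⊢; omega)
    refine ⟨IH.1, IH.2.1, ?_, ?_, ?_⟩
    · intro j hj
      exact IH.2.2.1 j (by simp at hj ⊢; omega)
    · intro j v hv
      rcases IH.2.2.2.1 j v hv with ⟨j', hj'⟩ | hm
      · rcases S.mem j' (by omega) v hj' with rfl | ⟨j'', _, hm⟩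
        · exact Or.inr (List.mem_cons_self)
        · exact Or.inl ⟨j'', hm⟩
      · exact Or.inr (List.mem_cons_of_mem _ hm)
    · intro F' hF'
      obtain ⟨f', rfl⟩ : ∃ f', F' = f' + 1 := ⟨F' - 1, by omega⟩
      have hsame : insertTab (f'+1) T 0 x = Q := by
        rw [hQdef]
        exact insertTab_fuel_eq (f := n) (by rw [Nat.zero_add]; exact hemp n le_rfl) (by simp at hF'; omega) (by omega)
      show List.foldl _ (insertTab (f+1) T 0 x).1 xs = List.foldl _ (insertTab (f'+1) T 0 x).1 xs
      rw [hsame]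
      exact IH.2.2.2.2 (f'+1) (by simp at hF' ⊢; omega)

lemma std_empty : StdFrom (fun _ => ([] : List ℝ)) 0 :=
  ⟨fun j _ => List.Pairwise.nil, fun j _ => le_rfl, fun j _ k h1 _ => by simp at h1⟩

lemma disj_empty : DisjFrom (fun _ => ([] : List ℝ)) 0 :=
  ⟨fun j _ => List.nodup_nil, fun j j' _ _ v hv => by simp at hv⟩
lemma RSsteps_fst (F : ℕ) : ∀ (l : List ℝ) (acc : (ℕ → List ℝ) × List (ℕ × ℕ)),
    (l.foldl (fun acc x =>
      let r := insertTab F acc.1 0 x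
      (r.1, acc.2 ++ [r.2])) acc).1
      = l.foldl (fun Tc x => (insertTab F Tc 0 x).1) acc.1 := by
  intro l
  induction l with
  | nil => intro acc; rfl
  | cons x xs ihl => intro acc; exact ihl _

lemma tabF_concat (F : ℕ) (l : List ℝ) (x : ℝ) :
    tabF F (l ++ [x]) = (insertTab F (tabF F l) 0 x).1 := by
  unfold tabF
  rw [List.foldl_append]
  rfl

lemma RecPos_concat (l : List ℝ) (x : ℝ) :
    RecPos (l ++ [x])
      = (insertTab ((l ++ [x]).length + 1) (tabF ((l ++ [x]).length + 1) l) 0 x).2 := by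
  unfold RecPos RSsteps
  rw [List.foldl_append]
  simp only [List.foldl_cons, List.foldl_nil]
  rw [List.getLastD_concat]
  have h := RSsteps_fst ((l ++ [x]).length + 1) l ((fun _ => [], []) : (ℕ → List ℝ) × List (ℕ × ℕ))
  rw [h]
  rfl

/-- Monotonicity properties of the position of the last box added by
Robinson–Schensted insertion. -/
theorem recPos_monotone (a : List ℝ) (b b' : ℝ)
    (hd : (a ++ [b, b']).Pairwise (· ≠ ·)) (hbb : b < b') :
    (pOrd (RecPos (a ++ [b])) (RecPos (a ++ [b, b'])) ∧
      RecPos (a ++ [b]) ≠ RecPos (a ++ [b, b'])) ∧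
    (pOrd (RecPos (a ++ [b', b])) (RecPos (a ++ [b'])) ∧
      RecPos (a ++ [b', b]) ≠ RecPos (a ++ [b'])) ∧
    pOrd (RecPos (a ++ [b])) (RecPos (a ++ [b'])) ∧
    pOrd (RecPos (a ++ [b'])) (RecPos (a ++ [b, b'])) := by
  have hnd : (a ++ [b, b']).Nodup := hd
  rw [List.nodup_append] at hnd
  obtain ⟨hNa, hNbb, hdisJ⟩ := hnd
  have hba : b ∉ a := fun h => hdisJ b h b (by simp) rfl
  have hb'a : b' ∉ a := fun h => hdisJ b' h b' (by simp) rfl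
  set la := a.length with hla
  have M3 := fold_master a (fun _ => []) 0 std_empty disj_empty (fun j _ => rfl)
    (fun j v hv => absurd hv List.not_mem_nil) hNa (la+2+1) (by omega)
  set TA := tabF (la+2+1) a with hTAdef
  have hTAfold : TA = a.foldl (fun Tc x => (insertTab (la+2+1) Tc 0 x).1) (fun _ => []) := rfl
  have stdA : StdFrom TA 0 := by rw [hTAfold]; exact M3.1
  have disjA : DisjFrom TA 0 := by rw [hTAfold]; exact M3.2.1
  have hempA : ∀ j, la ≤ j → TA j = [] := by
    intro j hj
    rw [hTAfold]
    exact M3.2.2.1 j (by omega)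
  have hmemA : ∀ j v, v ∈ TA j → v ∈ a := by
    intro j v hv
    rw [hTAfold] at hv
    rcases M3.2.2.2.1 j v hv with ⟨j', hj'⟩ | hm
    · exact absurd hj' List.not_mem_nil
    · exact hm
  have hbA : ∀ j, 0 ≤ j → b ∉ TA j := fun j _ hv => hba (hmemA j b hv)
  have hb'A : ∀ j, 0 ≤ j → b' ∉ TA j := fun j _ hv => hb'a (hmemA j b' hv)
  have htermA : TA (0 + (la+2)) = [] := hempA _ (by omega)
  have htermA0 : TA (0 + la) = [] := hempA _ (by omega)
  have hTA2 : tabF (la+2) a = TA := by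
    rw [hTAfold]
    exact (M3.2.2.2.2 (la+2) (by omega)).symm
  set P_b := insertTab (la+2+1) TA 0 b with hPbdef
  set P_b' := insertTab (la+2+1) TA 0 b' with hPb'def
  have e_b : insertTab (la+2) TA 0 b = P_b :=
    insertTab_fuel_eq (f := la) htermA0 (by omega) (by omega)
  have e_b' : insertTab (la+2) TA 0 b' = P_b' :=
    insertTab_fuel_eq (f := la) htermA0 (by omega) (by omega)
  have r1 : RecPos (a ++ [b]) = P_b.2 := by
    rw [RecPos_concat a b, show (a ++ [b]).length + 1 = la + 2 by simp [hla], hTA2, e_b]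
  have r2 : RecPos (a ++ [b']) = P_b'.2 := by
    rw [RecPos_concat a b', show (a ++ [b']).length + 1 = la + 2 by simp [hla], hTA2, e_b']
  have r3 : RecPos (a ++ [b, b']) = (insertTab (la+2+1) P_b.1 0 b').2 := by
    rw [show a ++ [b, b'] = (a ++ [b]) ++ [b'] by simp,
      RecPos_concat (a ++ [b]) b',
      show ((a ++ [b]) ++ [b']).length + 1 = la + 2 + 1 by simp [hla],
      tabF_concat, ← hTAdef]
  have r4 : RecPos (a ++ [b', b]) = (insertTab (la+2+1) P_b'.1 0 b).2 := by
    rw [show a ++ [b', b] = (a ++ [b']) ++ [b] by simp,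
      RecPos_concat (a ++ [b']) b,
      show ((a ++ [b']) ++ [b]).length + 1 = la + 2 + 1 by simp [hla],
      tabF_concat, ← hTAdef]
  have A := lemA (la+2) TA 0 b b' stdA disjA hbA hb'A hbb htermA
  have B := lemB (la+2) TA 0 b' b stdA disjA hb'A hbA hbb htermA
  have C := lemC (la+2) TA 0 b b' stdA disjA hbA hb'A hbb htermA
  have D := lemD (la+2) TA 0 b b' stdA disjA hbA hb'A hbb htermA
  refine ⟨⟨⟨?_, ?_⟩, ?_⟩, ⟨⟨?_, ?_⟩, ?_⟩, ⟨?_, ?_⟩, ⟨?_, ?_⟩⟩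
  · rw [r1, r3]; exact le_of_lt A.2
  · rw [r1, r3]; exact A.1
  · rw [r1, r3]
    intro h
    exact absurd (congrArg Prod.snd h) (ne_of_lt A.2)
  · rw [r2, r4]; exact B.1
  · rw [r2, r4]; exact le_of_lt B.2
  · rw [r2, r4]
    intro h
    exact absurd (congrArg Prod.fst h).symm (ne_of_lt B.2)
  · rw [r1, r2]; exact C.1
  · rw [r1, r2]; exact C.2
  · rw [r2, r3]; exact D.1
  · rw [r2, r3]; exact D.2
end
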